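/- arXiv:1902.03408 — 2 statements merged into one kernel-verified Lean document; each statement's English description precedes it below -/
import Mathlib

section
/- Fix projective plane identifications. For every cell x of the infinite magic carpet IMC there exists M such that for all integers m ≥ M, the ball of radius m·2^m around x satisfies #B(x, m·2^m) ≥ 8^m. -/
/-!
Magic carpets (Sierpinski carpet with torus / Klein bottle / projective plane
identifications of the sides of the vacant squares), following
"Analysis on the projective octagasket and other fractafolds" setup of the paper
"Magic carpets" (Goodman–Siu–Strichartz et al.).

Cells of the infinite blowup are indexed by their lower-left corners in `ℤ × ℤ`
(in units where every cell is a unit square).  A lattice square is a cell iff no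
base-3 digit position carries the digit `1` in both coordinates simultaneously.
The vacant square ("hole") of level `s` at block `(a, b)` is the middle ninth of
the level-`(s+1)` block with block coordinates `(a, b)`, i.e. the square
`[a·3^(s+1)+3^s, a·3^(s+1)+2·3^s) × [b·3^(s+1)+3^s, b·3^(s+1)+2·3^s)`; it is a
genuine vacant square of the carpet iff `(a,b)` itself satisfies the cell
condition.  Opposite sides of each vacant square are identified according to the
chosen identification type; orientation-reversal of a pair of sides reverses the
transverse coordinate.
-/

namespace MagicCarpet

/-- The three ways of identifying the two pairs of opposite sides of a vacant square:
torus (both pairs orientation preserved), Klein bottle (one pair preserved, one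
reversed) and projective plane (both pairs reversed). -/
inductive IdentType
  | torus
  | klein
  | proj
  deriving DecidableEq

/-- Whether crossing a vacant square horizontally (through its vertical pair of sides)
reverses the transverse (vertical) coordinate. -/
def flipH : IdentType → Bool
  | .torus => false
  | .klein => false
  | .proj => true

/-- Whether crossing a vacant square vertically (through its horizontal pair of sides)
reverses the transverse (horizontal) coordinate. -/
def flipV : IdentType → Bool
  | .torus => false
  | .klein => true
  | .proj => true

/-- An assignment of an identification type to every vacant square; the vacant square of
level `s` at block `(a, b)` receives the type `ι s a b`. -/
abbrev IdentAssignment := ℕ → ℤ → ℤ → IdentType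

/-- The uniform assignment: the same identification type at every vacant square. -/
def uniform (t : IdentType) : IdentAssignment := fun _ _ _ => t

/-- The base-3 digit of an integer at position `k` (floor division, so digits of
negative integers are eventually `2`). -/
def dig (k : ℕ) (n : ℤ) : ℤ := Int.emod (Int.ediv n (3 ^ k)) 3

/-- `p` is (the lower-left corner of) a cell of the infinite blowup of the Sierpinski
carpet iff no base-3 digit position carries the digit `1` in both coordinates. -/
def IsCell (p : ℤ × ℤ) : Prop := ∀ k : ℕ, ¬(dig k p.1 = 1 ∧ dig k p.2 = 1)

/-- The cells of the infinite magic carpet. -/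
def Cell : Type := { p : ℤ × ℤ // IsCell p }

/-- `p` and `q` are glued across the vacant square of level `s` at block `(a, b)`
horizontally: `p` is the cell immediately to the left of the vacant square, `q` the
corresponding cell immediately to its right (with the transverse coordinate reversed
when the identification of that pair of sides is orientation reversing). -/
def HoleAdjH (ι : IdentAssignment) (p q : ℤ × ℤ) : Prop :=
  ∃ (s : ℕ) (a b : ℤ), IsCell (a, b) ∧
    p.1 = a * 3 ^ (s + 1) + 3 ^ s - 1 ∧
    q.1 = a * 3 ^ (s + 1) + 2 * 3 ^ s ∧
    b * 3 ^ (s + 1) + 3 ^ s ≤ p.2 ∧ p.2 < b * 3 ^ (s + 1) + 2 * 3 ^ s ∧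
    q.2 = if flipH (ι s a b) then 2 * (b * 3 ^ (s + 1) + 3 ^ s) + 3 ^ s - 1 - p.2 else p.2

/-- Vertical analogue of `HoleAdjH`: `p` is immediately below the vacant square and `q`
immediately above it. -/
def HoleAdjV (ι : IdentAssignment) (p q : ℤ × ℤ) : Prop :=
  ∃ (s : ℕ) (a b : ℤ), IsCell (a, b) ∧
    p.2 = b * 3 ^ (s + 1) + 3 ^ s - 1 ∧
    q.2 = b * 3 ^ (s + 1) + 2 * 3 ^ s ∧
    a * 3 ^ (s + 1) + 3 ^ s ≤ p.1 ∧ p.1 < a * 3 ^ (s + 1) + 2 * 3 ^ s ∧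
    q.1 = if flipV (ι s a b) then 2 * (a * 3 ^ (s + 1) + 3 ^ s) + 3 ^ s - 1 - p.1 else p.1

/-- Two cells of the infinite magic carpet are adjacent iff they share an edge after
identification: either they share an edge in the plane, or they are glued together
across some vacant square. -/
def IMCAdj (ι : IdentAssignment) (p q : ℤ × ℤ) : Prop :=
  IsCell p ∧ IsCell q ∧ p ≠ q ∧
    (|p.1 - q.1| + |p.2 - q.2| = 1 ∨
      HoleAdjH ι p q ∨ HoleAdjH ι q p ∨ HoleAdjV ι p q ∨ HoleAdjV ι q p)

/-- The infinite magic carpet graph `IMC` determined by the identification assignment `ι`: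
vertices are the cells, two cells being adjacent exactly when they share an edge after
identification. -/
def IMC (ι : IdentAssignment) : SimpleGraph Cell where
  Adj p q := IMCAdj ι p.val q.val
  symm := by
    constructor
    rintro p q ⟨hp, hq, hne, hd⟩
    refine ⟨hq, hp, hne.symm, ?_⟩
    rcases hd with h | h | h | h | h
    · left
      rw [abs_sub_comm q.val.1 p.val.1, abs_sub_comm q.val.2 p.val.2]
      exact h
    · exact Or.inr (Or.inr (Or.inl h))
    · exact Or.inr (Or.inl h)
    · exact Or.inr (Or.inr (Or.inr (Or.inr h)))
    · exact Or.inr (Or.inr (Or.inr (Or.inl h)))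
  loopless := by
    constructor
    rintro p ⟨_, _, hne, _⟩
    exact hne rfl

/-- The ball `B(x, r)` of radius `r` around the cell `x`, in the geodesic graph metric
(the distance between two cells is the length of a shortest path of successively
adjacent cells joining them). -/
def ball (ι : IdentAssignment) (x : Cell) (r : ℕ) : Set Cell :=
  { y | (IMC ι).dist x y < r }

/-- The block coordinates of the copy of `V_m` containing the cell `p`. -/
def copyOf (m : ℕ) (p : Cell) : ℤ × ℤ :=
  (Int.ediv p.val.1 (3 ^ m), Int.ediv p.val.2 (3 ^ m))

/-- The cell `p` belongs to the copy of `V_m` with block coordinates `C`. -/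
def InCopy (m : ℕ) (C : ℤ × ℤ) (p : Cell) : Prop := copyOf m p = C

/-- The `3^m × 3^m` block with block coordinates `C` is a copy of `V_m` inside the
infinite magic carpet. -/
def IsCopy (C : ℤ × ℤ) : Prop := IsCell C

/-- `p` is one of the four corner cells of the copy of `V_m` at block `C`. -/
def IsCornerCell (m : ℕ) (C : ℤ × ℤ) (p : Cell) : Prop :=
  InCopy m C p ∧
    (p.val.1 = C.1 * 3 ^ m ∨ p.val.1 = (C.1 + 1) * 3 ^ m - 1) ∧
    (p.val.2 = C.2 * 3 ^ m ∨ p.val.2 = (C.2 + 1) * 3 ^ m - 1)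

/-- The sequence `R` with `R 0 = 0` and `R (m+1) = max (2·R m + 3) (2·R m + 2^m + 1)`. -/
def R : ℕ → ℕ
  | 0 => 0
  | m + 1 => max (2 * R m + 3) (2 * R m + 2 ^ m + 1)

/-- The four sides of a square block (or of a rectangular stack of blocks). -/
inductive Side
  | left
  | right
  | bottom
  | top
  deriving DecidableEq

/-- The opposite side. -/
def Side.opp : Side → Side
  | .left => .right
  | .right => .left
  | .bottom => .top
  | .top => .bottom

/-- The cell `p` lies in the copy of `V_m` at block `C`, along its side `d` (so one of the
edges of `p` lies on the corresponding `m`-edge of that copy). -/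
def OnSide (m : ℕ) (C : ℤ × ℤ) (d : Side) (p : Cell) : Prop :=
  InCopy m C p ∧
    match d with
    | .left => p.val.1 = C.1 * 3 ^ m
    | .right => p.val.1 = (C.1 + 1) * 3 ^ m - 1
    | .bottom => p.val.2 = C.2 * 3 ^ m
    | .top => p.val.2 = (C.2 + 1) * 3 ^ m - 1

/-- The column of cells with first coordinate `c` hits (has a cell whose edge lies on the
boundary of) the vacant square of level `s` whose horizontal block coordinate is `a`. -/
def ColumnHitsStitch (s : ℕ) (a : ℤ) (c : ℤ) : Prop :=
  a * 3 ^ (s + 1) + 3 ^ s - 1 ≤ c ∧ c ≤ a * 3 ^ (s + 1) + 2 * 3 ^ s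

/-- The vacant square of level `s` at block `(a, b)` lies in the interior of the copy of
`V_m` at block `C`. -/
def HoleInsideCopy (m : ℕ) (C : ℤ × ℤ) (s : ℕ) (a b : ℤ) : Prop :=
  C.1 * 3 ^ m ≤ a * 3 ^ (s + 1) ∧ (a + 1) * 3 ^ (s + 1) ≤ (C.1 + 1) * 3 ^ m ∧
  C.2 * 3 ^ m ≤ b * 3 ^ (s + 1) ∧ (b + 1) * 3 ^ (s + 1) ≤ (C.2 + 1) * 3 ^ m

/-- The copy of `V_m` at block `W` is glued just above the copy at block `V` (they are
vertical neighbours, intersecting along a horizontal `m`-edge): either the blocks are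
adjacent in the plane, or the top side of `V` and the bottom side of `W` are identified
sides of a vacant square of level `≥ m`.  The flag `f` records whether this gluing
reverses the horizontal coordinate. -/
def GluedVert (ι : IdentAssignment) (m : ℕ) (V W : ℤ × ℤ) (f : Bool) : Prop :=
  IsCell V ∧ IsCell W ∧
    ((W.1 = V.1 ∧ W.2 = V.2 + 1 ∧ f = false) ∨
      ∃ (s : ℕ) (a b : ℤ), m ≤ s ∧ IsCell (a, b) ∧
        (V.2 + 1) * 3 ^ m = b * 3 ^ (s + 1) + 3 ^ s ∧
        W.2 * 3 ^ m = b * 3 ^ (s + 1) + 2 * 3 ^ s ∧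
        a * 3 ^ (s + 1) + 3 ^ s ≤ V.1 * 3 ^ m ∧
        (V.1 + 1) * 3 ^ m ≤ a * 3 ^ (s + 1) + 2 * 3 ^ s ∧
        f = flipV (ι s a b) ∧
        (if f then W.1 * 3 ^ m = 2 * (a * 3 ^ (s + 1) + 3 ^ s) + 3 ^ s - (V.1 + 1) * 3 ^ m
          else W.1 = V.1))

/-- Horizontal analogue of `GluedVert`: `W` is glued just to the right of `V` (they are
horizontal neighbours, intersecting along a vertical `m`-edge). -/
def GluedHoriz (ι : IdentAssignment) (m : ℕ) (V W : ℤ × ℤ) (f : Bool) : Prop :=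
  IsCell V ∧ IsCell W ∧
    ((W.2 = V.2 ∧ W.1 = V.1 + 1 ∧ f = false) ∨
      ∃ (s : ℕ) (a b : ℤ), m ≤ s ∧ IsCell (a, b) ∧
        (V.1 + 1) * 3 ^ m = a * 3 ^ (s + 1) + 3 ^ s ∧
        W.1 * 3 ^ m = a * 3 ^ (s + 1) + 2 * 3 ^ s ∧
        b * 3 ^ (s + 1) + 3 ^ s ≤ V.2 * 3 ^ m ∧
        (V.2 + 1) * 3 ^ m ≤ b * 3 ^ (s + 1) + 2 * 3 ^ s ∧
        f = flipH (ι s a b) ∧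
        (if f then W.2 * 3 ^ m = 2 * (b * 3 ^ (s + 1) + 3 ^ s) + 3 ^ s - (V.2 + 1) * 3 ^ m
          else W.2 = V.2))

/-- An `m`-stack: a finite sequence of copies of `V_m`, consecutive copies being all
horizontal neighbours or all vertical neighbours.  Each copy carries a Boolean flag
recording its orientation relative to the first copy (so that the stack is isomorphic,
as a cell graph, to a rectangular stack of copies of `V_m`). -/
structure MStack (ι : IdentAssignment) (m : ℕ) where
  vert : Bool
  blocks : List ((ℤ × ℤ) × Bool)
  nonempty : blocks ≠ []
  copies : ∀ Bf ∈ blocks, IsCell Bf.1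
  head_flip : (blocks.head nonempty).2 = false
  chain : blocks.Chain' fun Vf Wf => ∃ g : Bool,
    (if vert then GluedVert ι m Vf.1 Wf.1 g else GluedHoriz ι m Vf.1 Wf.1 g) ∧
      Wf.2 = xor Vf.2 g

/-- The cell `p` lies in (one of the copies of `V_m` constituting) the `m`-stack `st`. -/
def MStack.MemCell {ι : IdentAssignment} {m : ℕ} (st : MStack ι m) (p : Cell) : Prop :=
  ∃ Bf ∈ st.blocks, copyOf m p = Bf.1

/-- The side `d` of the `3^m × 3^m` block `B`, as a set of points of the plane. -/
def blockSideSet (m : ℕ) (B : ℤ × ℤ) (d : Side) : Set (ℤ × ℤ) :=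
  match d with
  | .left => { p | p.1 = B.1 * 3 ^ m ∧ B.2 * 3 ^ m ≤ p.2 ∧ p.2 ≤ (B.2 + 1) * 3 ^ m }
  | .right => { p | p.1 = (B.1 + 1) * 3 ^ m ∧ B.2 * 3 ^ m ≤ p.2 ∧ p.2 ≤ (B.2 + 1) * 3 ^ m }
  | .bottom => { p | p.2 = B.2 * 3 ^ m ∧ B.1 * 3 ^ m ≤ p.1 ∧ p.1 ≤ (B.1 + 1) * 3 ^ m }
  | .top => { p | p.2 = (B.2 + 1) * 3 ^ m ∧ B.1 * 3 ^ m ≤ p.1 ∧ p.1 ≤ (B.1 + 1) * 3 ^ m }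

/-- The side `d` of the rectangular outer boundary of the `m`-stack `st`, as a set of
points of the plane (taking the recorded orientation flips into account). -/
def MStack.sideSet {ι : IdentAssignment} {m : ℕ} (st : MStack ι m) (d : Side) :
    Set (ℤ × ℤ) :=
  if st.vert then
    (match d with
    | .bottom => blockSideSet m (st.blocks.head st.nonempty).1 .bottom
    | .top => blockSideSet m (st.blocks.getLast st.nonempty).1 .top
    | .left =>
        { p | ∃ Bf ∈ st.blocks, p ∈ blockSideSet m Bf.1 (if Bf.2 then Side.right else Side.left) }
    | .right =>
        { p | ∃ Bf ∈ st.blocks, p ∈ blockSideSet m Bf.1 (if Bf.2 then Side.left else Side.right) })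
  else
    (match d with
    | .left => blockSideSet m (st.blocks.head st.nonempty).1 .left
    | .right => blockSideSet m (st.blocks.getLast st.nonempty).1 .right
    | .bottom =>
        { p | ∃ Bf ∈ st.blocks, p ∈ blockSideSet m Bf.1 (if Bf.2 then Side.top else Side.bottom) }
    | .top =>
        { p | ∃ Bf ∈ st.blocks, p ∈ blockSideSet m Bf.1 (if Bf.2 then Side.bottom else Side.top) })

/-- The side `d` of the unit cell with lower-left corner `c`, as a set of points. -/
def cellEdge (c : ℤ × ℤ) (d : Side) : Set (ℤ × ℤ) :=
  match d with
  | .left => { p | p.1 = c.1 ∧ c.2 ≤ p.2 ∧ p.2 ≤ c.2 + 1 }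
  | .right => { p | p.1 = c.1 + 1 ∧ c.2 ≤ p.2 ∧ p.2 ≤ c.2 + 1 }
  | .bottom => { p | p.2 = c.2 ∧ c.1 ≤ p.1 ∧ p.1 ≤ c.1 + 1 }
  | .top => { p | p.2 = c.2 + 1 ∧ c.1 ≤ p.1 ∧ p.1 ≤ c.1 + 1 }

/-- The cell `c` is on the set `S` (one of its four edges is contained in `S`). -/
def CellOnSet (c : Cell) (S : Set (ℤ × ℤ)) : Prop :=
  ∃ d : Side, cellEdge c.val d ⊆ S

/-- An axis-parallel segment of length `3^m` with `3^m`-aligned endpoints: if `vert` it is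
`{a·3^m} × [b·3^m, (b+1)·3^m]`, otherwise `[a·3^m, (a+1)·3^m] × {b·3^m}`.  (The `m`-edges
of the infinite magic carpet are such segments, taken up to identification.) -/
structure Seg where
  vert : Bool
  a : ℤ
  b : ℤ

/-- The set of points of the segment `e` (at scale `3^m`). -/
def Seg.pts (m : ℕ) (e : Seg) : Set (ℤ × ℤ) :=
  if e.vert then { p | p.1 = e.a * 3 ^ m ∧ e.b * 3 ^ m ≤ p.2 ∧ p.2 ≤ (e.b + 1) * 3 ^ m }
  else { p | p.2 = e.b * 3 ^ m ∧ e.a * 3 ^ m ≤ p.1 ∧ p.1 ≤ (e.a + 1) * 3 ^ m }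

/-- The segments `e` (on the left or bottom side of a vacant square of level `≥ m`) and
`e'` (the corresponding subsegment of the opposite side of that vacant square) are glued
by the identification of the sides of that vacant square. -/
def SegGlue (ι : IdentAssignment) (m : ℕ) (e e' : Seg) : Prop :=
  ∃ (s : ℕ) (a b : ℤ), m ≤ s ∧ IsCell (a, b) ∧
    ((e.vert = true ∧ e'.vert = true ∧
        e.a * 3 ^ m = a * 3 ^ (s + 1) + 3 ^ s ∧
        e'.a * 3 ^ m = a * 3 ^ (s + 1) + 2 * 3 ^ s ∧
        b * 3 ^ (s + 1) + 3 ^ s ≤ e.b * 3 ^ m ∧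
        (e.b + 1) * 3 ^ m ≤ b * 3 ^ (s + 1) + 2 * 3 ^ s ∧
        (if flipH (ι s a b) then
          e'.b * 3 ^ m = 2 * (b * 3 ^ (s + 1) + 3 ^ s) + 3 ^ s - (e.b + 1) * 3 ^ m
         else e'.b = e.b)) ∨
      (e.vert = false ∧ e'.vert = false ∧
        e.b * 3 ^ m = b * 3 ^ (s + 1) + 3 ^ s ∧
        e'.b * 3 ^ m = b * 3 ^ (s + 1) + 2 * 3 ^ s ∧
        a * 3 ^ (s + 1) + 3 ^ s ≤ e.a * 3 ^ m ∧
        (e.a + 1) * 3 ^ m ≤ a * 3 ^ (s + 1) + 2 * 3 ^ s ∧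
        (if flipV (ι s a b) then
          e'.a * 3 ^ m = 2 * (a * 3 ^ (s + 1) + 3 ^ s) + 3 ^ s - (e.a + 1) * 3 ^ m
         else e'.a = e.a)))

/-- Two segments represent the same `m`-edge of the infinite magic carpet iff they are
related by the equivalence generated by the gluings of the sides of the vacant squares. -/
def SegEquiv (ι : IdentAssignment) (m : ℕ) : Seg → Seg → Prop :=
  Relation.EqvGen fun e e' => SegGlue ι m e e' ∨ SegGlue ι m e' e

/-- The lattice points `p` (on the left or bottom side of a vacant square) and `q` (the
corresponding point of the opposite side) are glued by the identification of the sides of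
that vacant square. -/
def PtGlue (ι : IdentAssignment) (p q : ℤ × ℤ) : Prop :=
  ∃ (s : ℕ) (a b : ℤ), IsCell (a, b) ∧
    ((p.1 = a * 3 ^ (s + 1) + 3 ^ s ∧ q.1 = a * 3 ^ (s + 1) + 2 * 3 ^ s ∧
        b * 3 ^ (s + 1) + 3 ^ s ≤ p.2 ∧ p.2 ≤ b * 3 ^ (s + 1) + 2 * 3 ^ s ∧
        q.2 = if flipH (ι s a b) then 2 * (b * 3 ^ (s + 1) + 3 ^ s) + 3 ^ s - p.2 else p.2) ∨
      (p.2 = b * 3 ^ (s + 1) + 3 ^ s ∧ q.2 = b * 3 ^ (s + 1) + 2 * 3 ^ s ∧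
        a * 3 ^ (s + 1) + 3 ^ s ≤ p.1 ∧ p.1 ≤ a * 3 ^ (s + 1) + 2 * 3 ^ s ∧
        q.1 = if flipV (ι s a b) then 2 * (a * 3 ^ (s + 1) + 3 ^ s) + 3 ^ s - p.1 else p.1))

/-- Two lattice points represent the same vertex of the infinite magic carpet iff they
are related by the equivalence generated by the gluings of the sides of the vacant
squares. -/
def PtEquiv (ι : IdentAssignment) : ℤ × ℤ → ℤ × ℤ → Prop :=
  Relation.EqvGen fun p q => PtGlue ι p q ∨ PtGlue ι q p

/-- The segment forming the side `d` of the `3^m × 3^m` block `B`. -/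
def BlockSide (m : ℕ) (B : ℤ × ℤ) (d : Side) : Seg :=
  match d with
  | .left => ⟨true, B.1, B.2⟩
  | .right => ⟨true, B.1 + 1, B.2⟩
  | .bottom => ⟨false, B.1, B.2⟩
  | .top => ⟨false, B.1, B.2 + 1⟩

/-- The segment `e` represents the `m`-edge `E_{V,W}` along which the two distinct copies
`V` and `W` of `V_m` intersect after identification. -/
def IsEdgeBetween (ι : IdentAssignment) (m : ℕ) (V W : ℤ × ℤ) (e : Seg) : Prop :=
  V ≠ W ∧ IsCell V ∧ IsCell W ∧
    ∃ d d' : Side, SegEquiv ι m e (BlockSide m V d) ∧ SegEquiv ι m e (BlockSide m W d')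

/-- The `m`-edges represented by `e` and `e'` intersect (after identification). -/
def SegIntersect (ι : IdentAssignment) (m : ℕ) (e e' : Seg) : Prop :=
  ∃ (e₁ e₂ : Seg) (p q : ℤ × ℤ), SegEquiv ι m e e₁ ∧ SegEquiv ι m e' e₂ ∧
    p ∈ e₁.pts m ∧ q ∈ e₂.pts m ∧ PtEquiv ι p q

/-- The cell `c` is on the `m`-edge represented by `e` (one of its edges lies on the
`m`-edge, after identification). -/
def CellOnSeg (ι : IdentAssignment) (m : ℕ) (e : Seg) (c : Cell) : Prop :=
  ∃ e' : Seg, SegEquiv ι m e e' ∧ CellOnSet c (Seg.pts m e')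

/-- The `m`-edge represented by `e` lies (after identification) inside the point set `S`. -/
def SegOnSet (ι : IdentAssignment) (m : ℕ) (e : Seg) (S : Set (ℤ × ℤ)) : Prop :=
  ∃ e' : Seg, SegEquiv ι m e e' ∧ Seg.pts m e' ⊆ S

/-- The point `p` lies (after identification) on the `m`-edge represented by `e`. -/
def PtOnSeg (ι : IdentAssignment) (m : ℕ) (e : Seg) (p : ℤ × ℤ) : Prop :=
  ∃ (e' : Seg) (q : ℤ × ℤ), SegEquiv ι m e e' ∧ q ∈ Seg.pts m e' ∧ PtEquiv ι p q

/-- The `m`-sequence of a path: the copies of `V_m` containing its successive cells, with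
consecutive repetitions deleted. -/
def mSeq (ι : IdentAssignment) (m : ℕ) {x y : Cell} (w : (IMC ι).Walk x y) :
    List (ℤ × ℤ) :=
  (w.support.map (copyOf m)).destutter (· ≠ ·)

/-- `(i, V, W)` is an `m`-segment-of-two of the list `L`: `V` is the `i`-th entry of `L`,
`W` the `(i+1)`-st, and neither `V` nor `W` is the `(i-1)`-st entry (if it exists). -/
def IsSegTwo (L : List (ℤ × ℤ)) (i : ℕ) (V W : ℤ × ℤ) : Prop :=
  L[i]? = some V ∧ L[i + 1]? = some W ∧
    (i = 0 ∨ ∀ U, L[i - 1]? = some U → U ≠ V ∧ U ≠ W)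

/-- The path `w` enters the `m`-segment-of-two with copies `V, W` through the `m`-edge
represented by `e`: it has consecutive cells, both on that `m`-edge, of which only the
second lies in `V` or `W`. -/
def EntersThrough (ι : IdentAssignment) (m : ℕ) {x y : Cell} (w : (IMC ι).Walk x y)
    (V W : ℤ × ℤ) (e : Seg) : Prop :=
  ∃ (n : ℕ) (c c' : Cell), w.support[n]? = some c ∧ w.support[n + 1]? = some c' ∧
    CellOnSeg ι m e c ∧ CellOnSeg ι m e c' ∧
    copyOf m c ≠ V ∧ copyOf m c ≠ W ∧ (copyOf m c' = V ∨ copyOf m c' = W)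

/-- The path `w` exits the `m`-segment-of-two with copies `V, W` through the `m`-edge
represented by `e`: it has consecutive cells, both on that `m`-edge, of which only the
first lies in `V` or `W`. -/
def ExitsThrough (ι : IdentAssignment) (m : ℕ) {x y : Cell} (w : (IMC ι).Walk x y)
    (V W : ℤ × ℤ) (e : Seg) : Prop :=
  ∃ (n : ℕ) (c c' : Cell), w.support[n]? = some c ∧ w.support[n + 1]? = some c' ∧
    CellOnSeg ι m e c ∧ CellOnSeg ι m e c' ∧
    (copyOf m c = V ∨ copyOf m c = W) ∧ copyOf m c' ≠ V ∧ copyOf m c' ≠ W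

/-- `p` is the center of the `m`-segment-of-two `(i, V, W)` of the path `w`: the vertex at
which `E_{V,W}` and those of `Ent(i)`, `Exit(i)` that exist all intersect. -/
def IsCenter (ι : IdentAssignment) (m : ℕ) {x y : Cell} (w : (IMC ι).Walk x y) (i : ℕ)
    (V W : ℤ × ℤ) (p : ℤ × ℤ) : Prop :=
  IsSegTwo (mSeq ι m w) i V W ∧
    (∃ e : Seg, EntersThrough ι m w V W e ∨ ExitsThrough ι m w V W e) ∧
    (∃ evw : Seg, IsEdgeBetween ι m V W evw ∧ PtOnSeg ι m evw p) ∧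
    (∀ e : Seg, EntersThrough ι m w V W e → PtOnSeg ι m e p) ∧
    (∀ e : Seg, ExitsThrough ι m w V W e → PtOnSeg ι m e p)

/-- `p` is one of the four corner points of the copy of `V_m` at block `C`. -/
def IsCornerPt (m : ℕ) (C : ℤ × ℤ) (p : ℤ × ℤ) : Prop :=
  (p.1 = C.1 * 3 ^ m ∨ p.1 = (C.1 + 1) * 3 ^ m) ∧
  (p.2 = C.2 * 3 ^ m ∨ p.2 = (C.2 + 1) * 3 ^ m)

/-- The copies of `V_m` at blocks `C` and `D` share a corner vertex (after
identification). -/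
def SharesCornerVertex (ι : IdentAssignment) (m : ℕ) (C D : ℤ × ℤ) : Prop :=
  ∃ p q : ℤ × ℤ, IsCornerPt m C p ∧ IsCornerPt m D q ∧ PtEquiv ι p q

/-- Reduction of cell coordinates modulo the period lattice `3^m · ℤ²`. -/
def redMod (m : ℕ) (p : ℤ × ℤ) : ℤ × ℤ := (Int.emod p.1 (3 ^ m), Int.emod p.2 (3 ^ m))

/-- `p` lies in the fundamental domain `[0, 3^m) × [0, 3^m)`. -/
def InFund (m : ℕ) (p : ℤ × ℤ) : Prop := 0 ≤ p.1 ∧ p.1 < 3 ^ m ∧ 0 ≤ p.2 ∧ p.2 < 3 ^ m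

/-- Adjacency across the outer boundary of `MCT_m` (opposite sides of the outer square
identified with orientation preserved). -/
def WrapAdj (m : ℕ) (p q : ℤ × ℤ) : Prop :=
  (p.1 = 3 ^ m - 1 ∧ q.1 = 0 ∧ q.2 = p.2) ∨ (p.2 = 3 ^ m - 1 ∧ q.2 = 0 ∧ q.1 = p.1)

/-- The cell graph of `MCT_m`, the level-`m` magic carpet with torus identifications of
all inner vacant squares and of the outer boundary, on the cells of the fundamental
domain. -/
def MCTAdj (m : ℕ) (p q : ℤ × ℤ) : Prop :=
  InFund m p ∧ InFund m q ∧ IsCell p ∧ IsCell q ∧ p ≠ q ∧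
    (|p.1 - q.1| + |p.2 - q.2| = 1 ∨
      HoleAdjH (uniform .torus) p q ∨ HoleAdjH (uniform .torus) q p ∨
      HoleAdjV (uniform .torus) p q ∨ HoleAdjV (uniform .torus) q p ∨
      WrapAdj m p q ∨ WrapAdj m q p)

section ProofAux

lemma dig_eq (k : ℕ) (n : ℤ) : dig k n = n / 3 ^ k % 3 := rfl

lemma tpow_pos (k : ℕ) : (0:ℤ) < 3 ^ k := by positivity

lemma ediv_ediv' (a b c : ℤ) (hb : 0 < b) (hc : 0 < c) : a / b / c = a / (b * c) := by
  have hbc : 0 < b * c := by positivity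
  obtain ⟨q, r, ha, hr0, hrlt⟩ : ∃ q r, a = r + q * (b * c) ∧ 0 ≤ r ∧ r < b * c :=
    ⟨a / (b*c), a % (b*c), by linarith [Int.mul_ediv_add_emod a (b*c)], Int.emod_nonneg _ hbc.ne',
      Int.emod_lt_of_pos _ hbc⟩
  have h1 : a / b = r / b + q * c := by
    rw [ha, show r + q * (b * c) = r + (q * c) * b by ring, Int.add_mul_ediv_right _ _ hb.ne']
  have hrb0 : 0 ≤ r / b := Int.ediv_nonneg hr0 hb.le
  have hrblt : r / b < c := by
    rw [Int.ediv_lt_iff_lt_mul hb]; linarith [hrlt, mul_comm b c]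
  have h2 : a / (b * c) = q := by
    rw [ha, Int.add_mul_ediv_right _ _ hbc.ne', Int.ediv_eq_zero_of_lt hr0 hrlt, zero_add]
  rw [h1, h2, Int.add_mul_ediv_right _ _ hc.ne', Int.ediv_eq_zero_of_lt hrb0 hrblt, zero_add]

lemma ediv_decomp {m : ℕ} (k : ℕ) (c r : ℤ) (hr0 : 0 ≤ r) (hrlt : r < 3 ^ m) (hk : k ≤ m) :
    (c * 3 ^ m + r) / 3 ^ k = c * 3 ^ (m - k) + r / 3 ^ k := by
  have h : c * 3 ^ m + r = r + (c * 3 ^ (m - k)) * 3 ^ k := by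
    rw [mul_assoc, ← pow_add]; rw [show m - k + k = m by omega]; ring
  rw [h, Int.add_mul_ediv_right _ _ (tpow_pos k).ne', add_comm]

lemma ediv_block {m : ℕ} (c r : ℤ) (hr0 : 0 ≤ r) (hrlt : r < 3 ^ m) :
    (c * 3 ^ m + r) / 3 ^ m = c := by
  rw [ediv_decomp m c r hr0 hrlt le_rfl, Nat.sub_self, pow_zero, mul_one,
    Int.ediv_eq_zero_of_lt hr0 hrlt, add_zero]

lemma dig_low {m : ℕ} (k : ℕ) (c r : ℤ) (hr0 : 0 ≤ r) (hrlt : r < 3 ^ m) (hk : k < m) :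
    dig k (c * 3 ^ m + r) = dig k r := by
  rw [dig_eq, dig_eq]
  rw [ediv_decomp k c r hr0 hrlt hk.le]
  have h : c * 3 ^ (m - k) = (c * 3 ^ (m - k - 1)) * 3 := by
    rw [mul_assoc, ← pow_succ]; congr 2; omega
  rw [h, add_comm, Int.add_mul_emod_self_right]

lemma dig_high {m : ℕ} (k : ℕ) (c r : ℤ) (hr0 : 0 ≤ r) (hrlt : r < 3 ^ m) :
    dig (m + k) (c * 3 ^ m + r) = dig k c := by
  rw [dig_eq, dig_eq]
  rw [pow_add, ← ediv_ediv' _ _ _ (tpow_pos m) (tpow_pos k), ediv_block c r hr0 hrlt]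

lemma isCell_decomp {m : ℕ} (C : ℤ × ℤ) (r1 r2 : ℤ) (h1 : 0 ≤ r1) (h2 : r1 < 3 ^ m)
    (h3 : 0 ≤ r2) (h4 : r2 < 3 ^ m) :
    IsCell (C.1 * 3 ^ m + r1, C.2 * 3 ^ m + r2) ↔
      (IsCell C ∧ ∀ k < m, ¬(dig k r1 = 1 ∧ dig k r2 = 1)) := by
  constructor
  · intro h
    refine ⟨fun k => ?_, fun k hk => ?_⟩
    · have := h (m + k)
      rwa [dig_high k C.1 r1 h1 h2, dig_high k C.2 r2 h3 h4] at this
    · have := h k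
      rwa [dig_low k C.1 r1 h1 h2 hk, dig_low k C.2 r2 h3 h4 hk] at this
  · rintro ⟨hC, hlow⟩ k
    rcases lt_or_ge k m with hk | hk
    · rw [dig_low k C.1 r1 h1 h2 hk, dig_low k C.2 r2 h3 h4 hk]; exact hlow k hk
    · obtain ⟨j, rfl⟩ : ∃ j, k = m + j := ⟨k - m, by omega⟩
      rw [dig_high j C.1 r1 h1 h2, dig_high j C.2 r2 h3 h4]; exact hC j

/-- low offsets: 0 or 3^m - 1 -/
def Lo (m : ℕ) (u : ℤ) : Prop := u = 0 ∨ u = 3 ^ m - 1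

lemma Lo.nonneg {m u} (h : Lo m u) : 0 ≤ u := by
  rcases h with rfl | rfl
  · rfl
  · linarith [tpow_pos m]

lemma Lo.lt {m u} (h : Lo m u) : u < 3 ^ m := by
  rcases h with rfl | rfl
  · exact tpow_pos m
  · omega

lemma dig_zero' (k : ℕ) : dig k 0 = 0 := by rw [dig_eq]; simp

lemma dig_all_two {m k : ℕ} (hk : k < m) : dig k ((3:ℤ) ^ m - 1) = 2 := by
  rw [dig_eq]
  have h : (3:ℤ) ^ m - 1 = (3 ^ (m - k) - 1) * 3 ^ k + (3 ^ k - 1) := by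
    rw [sub_mul, one_mul, ← pow_add]; rw [show m - k + k = m by omega]; ring
  rw [h, add_comm, Int.add_mul_ediv_right _ _ (tpow_pos k).ne',
    Int.ediv_eq_zero_of_lt (by linarith [tpow_pos k]) (by omega), zero_add]
  have h2 : (3:ℤ) ^ (m - k) - 1 = 2 + (3 ^ (m - k - 1) - 1) * 3 := by
    rw [sub_mul, one_mul, ← pow_succ]; rw [show m - k - 1 + 1 = m - k by omega]; ring
  rw [h2, Int.add_mul_emod_self_right]
  rfl

lemma dig_lo {m k : ℕ} {u : ℤ} (h : Lo m u) (hk : k < m) : dig k u ≠ 1 := by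
  rcases h with rfl | rfl
  · rw [dig_zero']; norm_num
  · rw [dig_all_two hk]; norm_num

lemma isCell_lo {m : ℕ} {C : ℤ × ℤ} {u1 u2 : ℤ} (hC : IsCell C) (h1 : Lo m u1) (h2 : Lo m u2) :
    IsCell (C.1 * 3 ^ m + u1, C.2 * 3 ^ m + u2) := by
  rw [isCell_decomp C u1 u2 h1.nonneg h1.lt h2.nonneg h2.lt]
  exact ⟨hC, fun k hk h => dig_lo h1 hk h.1⟩


/-! ### Stage 2: the graph, walks with length bounds, adjacency constructors -/

abbrev pι : IdentAssignment := uniform IdentType.proj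

abbrev PG : SimpleGraph Cell := IMC pι

/-- Walk with length bound. -/
def WD (u v : Cell) (L : ℕ) : Prop := ∃ w : PG.Walk u v, w.length ≤ L

lemma WD.rfl (u : Cell) : WD u u 0 := ⟨SimpleGraph.Walk.nil, le_rfl⟩

lemma WD.symm {u v L} (h : WD u v L) : WD v u L := by
  obtain ⟨w, hw⟩ := h
  exact ⟨w.reverse, by simpa using hw⟩

lemma WD.trans {u v w L L'} (h : WD u v L) (h' : WD v w L') : WD u w (L + L') := by
  obtain ⟨p, hp⟩ := h
  obtain ⟨q, hq⟩ := h'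
  exact ⟨p.append q, by rw [SimpleGraph.Walk.length_append]; omega⟩

lemma WD.mono {u v L L'} (h : WD u v L) (hL : L ≤ L') : WD u v L' := by
  obtain ⟨p, hp⟩ := h
  exact ⟨p, hp.trans hL⟩

lemma WD.of_adj {u v} (h : PG.Adj u v) : WD u v 1 := ⟨h.toWalk, le_rfl⟩

lemma adj_planar {u v : Cell} (h : |u.val.1 - v.val.1| + |u.val.2 - v.val.2| = 1) :
    PG.Adj u v := by
  refine ⟨u.2, v.2, ?_, Or.inl h⟩
  intro he
  rw [he] at h
  simp at h

lemma wd_right {u v : Cell} (h1 : v.val.1 = u.val.1 + 1) (h2 : v.val.2 = u.val.2) :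
    WD u v 1 :=
  WD.of_adj (adj_planar (by rw [h1, h2]; simp))

lemma wd_up {u v : Cell} (h1 : v.val.1 = u.val.1) (h2 : v.val.2 = u.val.2 + 1) :
    WD u v 1 :=
  WD.of_adj (adj_planar (by rw [h1, h2]; simp))

lemma adj_holeH {u v : Cell} (s : ℕ) (a b : ℤ) (hab : IsCell (a, b))
    (h1 : u.val.1 = a * 3 ^ (s + 1) + 3 ^ s - 1)
    (h2 : v.val.1 = a * 3 ^ (s + 1) + 2 * 3 ^ s)
    (h3 : b * 3 ^ (s + 1) + 3 ^ s ≤ u.val.2)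
    (h4 : u.val.2 < b * 3 ^ (s + 1) + 2 * 3 ^ s)
    (h5 : v.val.2 = 2 * (b * 3 ^ (s + 1) + 3 ^ s) + 3 ^ s - 1 - u.val.2) :
    PG.Adj u v := by
  have hne : u.val.1 ≠ v.val.1 := by
    rw [h1, h2]; have := tpow_pos s; intro hh; omega
  refine ⟨u.2, v.2, fun he => hne (by rw [he]), Or.inr (Or.inl ?_)⟩
  exact ⟨s, a, b, hab, h1, h2, h3, h4, by simpa [pι, uniform, flipH] using h5⟩

lemma adj_holeV {u v : Cell} (s : ℕ) (a b : ℤ) (hab : IsCell (a, b))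
    (h1 : u.val.2 = b * 3 ^ (s + 1) + 3 ^ s - 1)
    (h2 : v.val.2 = b * 3 ^ (s + 1) + 2 * 3 ^ s)
    (h3 : a * 3 ^ (s + 1) + 3 ^ s ≤ u.val.1)
    (h4 : u.val.1 < a * 3 ^ (s + 1) + 2 * 3 ^ s)
    (h5 : v.val.1 = 2 * (a * 3 ^ (s + 1) + 3 ^ s) + 3 ^ s - 1 - u.val.1) :
    PG.Adj u v := by
  have hne : u.val.2 ≠ v.val.2 := by
    rw [h1, h2]; have := tpow_pos s; intro hh; omega
  refine ⟨u.2, v.2, fun he => hne (by rw [he]), Or.inr (Or.inr (Or.inr (Or.inl ?_)))⟩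
  exact ⟨s, a, b, hab, h1, h2, h3, h4, by simpa [pι, uniform, flipV] using h5⟩

/-! ### Stage 2b: corners -/

def off (m : ℕ) (h : Bool) : ℤ := if h then 3 ^ m - 1 else 0

lemma lo_off (m : ℕ) (h : Bool) : Lo m (off m h) := by
  cases h
  · exact Or.inl rfl
  · exact Or.inr rfl

def cnrP (m : ℕ) (C : ℤ × ℤ) (h v : Bool) : ℤ × ℤ :=
  (C.1 * 3 ^ m + off m h, C.2 * 3 ^ m + off m v)

def cnr (m : ℕ) {C : ℤ × ℤ} (hC : IsCell C) (h v : Bool) : Cell :=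
  ⟨cnrP m C h v, isCell_lo hC (lo_off m h) (lo_off m v)⟩

/-! ### Stage 2c: symmetries -/

def negx (p : ℤ × ℤ) : ℤ × ℤ := (-1 - p.1, p.2)

def swp (p : ℤ × ℤ) : ℤ × ℤ := (p.2, p.1)

lemma ediv_neg' (n d : ℤ) (hd : 0 < d) : (-1 - n) / d = -1 - n / d := by
  have h0 : 0 ≤ n % d := Int.emod_nonneg n hd.ne'
  have h1 : n % d < d := Int.emod_lt_of_pos n hd
  have key : -1 - n = (d - 1 - n % d) + (-1 - n / d) * d := by
    have := Int.emod_add_mul_ediv n d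
    ring_nf
    ring_nf at this
    linarith
  rw [key, Int.add_mul_ediv_right _ _ hd.ne',
    Int.ediv_eq_zero_of_lt (by omega) (by omega), zero_add]

lemma dig_negx (k : ℕ) (n : ℤ) : dig k (-1 - n) = 2 - dig k n := by
  rw [dig_eq, dig_eq, ediv_neg' n _ (tpow_pos k)]
  set q := n / 3 ^ k with hq
  have h0 : 0 ≤ q % 3 := Int.emod_nonneg q (by norm_num)
  have h1 : q % 3 < 3 := Int.emod_lt_of_pos q (by norm_num)
  have key : -1 - q = (2 - q % 3) + 3 * (-1 - q / 3) := by
    have := Int.emod_add_mul_ediv q 3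
    linarith
  rw [key, Int.add_mul_emod_self_left, Int.emod_eq_of_lt (by omega) (by omega)]

lemma isCell_negx {p : ℤ × ℤ} (h : IsCell p) : IsCell (negx p) := by
  intro k hk
  have := h k
  rw [show (negx p).1 = -1 - p.1 from rfl, show (negx p).2 = p.2 from rfl] at hk
  rw [dig_negx] at hk
  exact this ⟨by omega, hk.2⟩

lemma isCell_swp {p : ℤ × ℤ} (h : IsCell p) : IsCell (swp p) := by
  intro k hk
  exact h k ⟨hk.2, hk.1⟩

def cX (u : Cell) : Cell := ⟨negx u.val, isCell_negx u.2⟩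

def cS (u : Cell) : Cell := ⟨swp u.val, isCell_swp u.2⟩

lemma pow_succ3 (s : ℕ) : (3:ℤ) ^ (s + 1) = 3 * 3 ^ s := by rw [pow_succ]; ring

lemma flip_uniform_H (s : ℕ) (a b : ℤ) : flipH (pι s a b) = true := rfl
lemma flip_uniform_V (s : ℕ) (a b : ℤ) : flipV (pι s a b) = true := rfl

lemma holeAdjH_negx {p q : ℤ × ℤ} (h : HoleAdjH pι p q) : HoleAdjH pι (negx q) (negx p) := by
  obtain ⟨s, a, b, hab, h1, h2, h3, h4, h5⟩ := h
  simp only [pι, uniform, flipH, reduceIte] at h5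
  have ht := tpow_pos s
  refine ⟨s, -1 - a, b, isCell_negx hab, ?_, ?_, ?_, ?_, ?_⟩
  · show -1 - q.1 = _
    rw [pow_succ3] at h2 ⊢; linarith
  · show -1 - p.1 = _
    rw [pow_succ3] at h1 ⊢; linarith
  · show _ ≤ q.2
    rw [pow_succ3] at h3 h4 h5 ⊢; linarith
  · show q.2 < _
    rw [pow_succ3] at h3 h4 h5 ⊢; linarith
  · show p.2 = _
    simp only [pι, uniform, flipH, reduceIte]
    show p.2 = 2 * _ + _ - 1 - (negx q).2
    show p.2 = 2 * _ + _ - 1 - q.2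
    rw [pow_succ3] at h5 ⊢; linarith

lemma holeAdjV_negx {p q : ℤ × ℤ} (h : HoleAdjV pι p q) : HoleAdjV pι (negx p) (negx q) := by
  obtain ⟨s, a, b, hab, h1, h2, h3, h4, h5⟩ := h
  simp only [pι, uniform, flipV, reduceIte] at h5
  have ht := tpow_pos s
  refine ⟨s, -1 - a, b, isCell_negx hab, ?_, ?_, ?_, ?_, ?_⟩
  · exact h1
  · exact h2
  · show _ ≤ -1 - p.1
    rw [pow_succ3] at h3 h4 ⊢; linarith
  · show -1 - p.1 < _
    rw [pow_succ3] at h3 h4 ⊢; linarith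
  · show -1 - q.1 = _
    simp only [pι, uniform, flipV, reduceIte]
    show -1 - q.1 = 2 * _ + _ - 1 - (negx p).1
    show -1 - q.1 = 2 * _ + _ - 1 - (-1 - p.1)
    rw [pow_succ3] at h5 ⊢; linarith

lemma holeAdjH_swp {p q : ℤ × ℤ} (h : HoleAdjH pι p q) : HoleAdjV pι (swp p) (swp q) := by
  obtain ⟨s, a, b, hab, h1, h2, h3, h4, h5⟩ := h
  simp only [pι, uniform, flipH, reduceIte] at h5
  exact ⟨s, b, a, isCell_swp hab, h1, h2, h3, h4, by
    simp only [pι, uniform, flipV, reduceIte]; exact h5⟩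

lemma holeAdjV_swp {p q : ℤ × ℤ} (h : HoleAdjV pι p q) : HoleAdjH pι (swp p) (swp q) := by
  obtain ⟨s, a, b, hab, h1, h2, h3, h4, h5⟩ := h
  simp only [pι, uniform, flipV, reduceIte] at h5
  exact ⟨s, b, a, isCell_swp hab, h1, h2, h3, h4, by
    simp only [pι, uniform, flipH, reduceIte]; exact h5⟩

lemma adj_cX {u v : Cell} (h : PG.Adj u v) : PG.Adj (cX u) (cX v) := by
  obtain ⟨hu, hv, hne, hd⟩ := h
  refine ⟨isCell_negx hu, isCell_negx hv, ?_, ?_⟩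
  · intro he
    change negx u.val = negx v.val at he
    apply hne
    have h2 : (negx u.val).1 = (negx v.val).1 := congrArg Prod.fst he
    have h3 : (negx u.val).2 = (negx v.val).2 := congrArg Prod.snd he
    simp only [negx] at h2 h3
    exact Prod.ext (by omega) h3
  · rcases hd with h | h | h | h | h
    · left
      simp only [cX, negx]
      rw [show -1 - u.val.1 - (-1 - v.val.1) = -(u.val.1 - v.val.1) by ring, abs_neg]
      exact h
    · exact Or.inr (Or.inr (Or.inl (holeAdjH_negx h)))
    · exact Or.inr (Or.inl (holeAdjH_negx h))
    · exact Or.inr (Or.inr (Or.inr (Or.inl (holeAdjV_negx h))))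
    · exact Or.inr (Or.inr (Or.inr (Or.inr (holeAdjV_negx h))))

lemma adj_cS {u v : Cell} (h : PG.Adj u v) : PG.Adj (cS u) (cS v) := by
  obtain ⟨hu, hv, hne, hd⟩ := h
  refine ⟨isCell_swp hu, isCell_swp hv, ?_, ?_⟩
  · intro he
    change swp u.val = swp v.val at he
    apply hne
    have h2 : (swp u.val).1 = (swp v.val).1 := congrArg Prod.fst he
    have h3 : (swp u.val).2 = (swp v.val).2 := congrArg Prod.snd he
    simp only [swp] at h2 h3
    exact Prod.ext h3 h2
  · rcases hd with h | h | h | h | h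
    · left
      simp only [cS, swp]
      rw [add_comm]
      exact h
    · exact Or.inr (Or.inr (Or.inr (Or.inl (holeAdjH_swp h))))
    · exact Or.inr (Or.inr (Or.inr (Or.inr (holeAdjH_swp h))))
    · exact Or.inr (Or.inl (holeAdjV_swp h))
    · exact Or.inr (Or.inr (Or.inl (holeAdjV_swp h)))

lemma WD.map_cX {u v L} (h : WD u v L) : WD (cX u) (cX v) L := by
  obtain ⟨w, hw⟩ := h
  exact ⟨w.map ⟨cX, adj_cX⟩, by simpa using hw⟩

lemma WD.map_cS {u v L} (h : WD u v L) : WD (cS u) (cS v) L := by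
  obtain ⟨w, hw⟩ := h
  exact ⟨w.map ⟨cS, adj_cS⟩, by simpa using hw⟩


/-! ### Stage 3a: blocks, corner identities, transport -/

lemma cnr_val (m : ℕ) {C : ℤ × ℤ} (hC : IsCell C) (h v : Bool) :
    (cnr m hC h v).val =
      (C.1 * 3 ^ m + (if h then 3 ^ m - 1 else 0), C.2 * 3 ^ m + (if v then 3 ^ m - 1 else 0)) :=
  rfl

lemma cnr_congr {m : ℕ} {C C' : ℤ × ℤ} (hC : IsCell C) (hC' : IsCell C') (hE : C = C')
    (h v : Bool) : cnr m hC h v = cnr m hC' h v := by subst hE; rfl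

lemma wd_congr {u u' v v' : Cell} {L : ℕ} (hu : u = u') (hv : v = v') (h : WD u v L) :
    WD u' v' L := hu ▸ hv ▸ h

lemma dig0_small {t : ℤ} (h1 : 0 ≤ t) (h2 : t < 3) : dig 0 t = t := by
  rw [dig_eq, pow_zero, Int.ediv_one, Int.emod_eq_of_lt h1 h2]

lemma isCell_sub {C : ℤ × ℤ} (hC : IsCell C) {t1 t2 : ℤ} (h1 : 0 ≤ t1) (h2 : t1 < 3)
    (h3 : 0 ≤ t2) (h4 : t2 < 3) (h5 : ¬(t1 = 1 ∧ t2 = 1)) :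
    IsCell (C.1 * 3 + t1, C.2 * 3 + t2) := by
  have := (isCell_decomp (m := 1) C t1 t2 h1 (by rw [pow_one]; exact h2)
    h3 (by rw [pow_one]; exact h4)).mpr
  rw [pow_one] at this
  refine this ⟨hC, fun k hk => ?_⟩
  interval_cases k
  rw [dig0_small h1 h2, dig0_small h3 h4]
  exact h5

lemma ediv_eq_iff' {u c d : ℤ} (hd : 0 < d) : u / d = c ↔ c * d ≤ u ∧ u < (c + 1) * d := by
  constructor
  · intro h
    have h1 : 0 ≤ u % d := Int.emod_nonneg u hd.ne'
    have h2 : u % d < d := Int.emod_lt_of_pos u hd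
    have h3 := Int.mul_ediv_add_emod u d
    rw [h] at h3
    constructor <;> nlinarith
  · rintro ⟨h1, h2⟩
    have key : u = (u - c * d) + c * d := by ring
    rw [key, Int.add_mul_ediv_right _ _ hd.ne',
      Int.ediv_eq_zero_of_lt (by linarith) (by nlinarith), zero_add]

def InBlk (m : ℕ) (C : ℤ × ℤ) (u : Cell) : Prop :=
  u.val.1 / 3 ^ m = C.1 ∧ u.val.2 / 3 ^ m = C.2

lemma blk_isCell (m : ℕ) (u : Cell) : IsCell (u.val.1 / 3 ^ m, u.val.2 / 3 ^ m) := by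
  have h1 := Int.mul_ediv_add_emod u.val.1 (3 ^ m)
  have h2 := Int.mul_ediv_add_emod u.val.2 (3 ^ m)
  have hr1 : 0 ≤ u.val.1 % 3 ^ m := Int.emod_nonneg _ (tpow_pos m).ne'
  have hr2 : u.val.1 % 3 ^ m < 3 ^ m := Int.emod_lt_of_pos _ (tpow_pos m)
  have hr3 : 0 ≤ u.val.2 % 3 ^ m := Int.emod_nonneg _ (tpow_pos m).ne'
  have hr4 : u.val.2 % 3 ^ m < 3 ^ m := Int.emod_lt_of_pos _ (tpow_pos m)
  have hu : IsCell ((u.val.1 / 3 ^ m) * 3 ^ m + u.val.1 % 3 ^ m,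
      (u.val.2 / 3 ^ m) * 3 ^ m + u.val.2 % 3 ^ m) := by
    have : ((u.val.1 / 3 ^ m) * 3 ^ m + u.val.1 % 3 ^ m,
        (u.val.2 / 3 ^ m) * 3 ^ m + u.val.2 % 3 ^ m) = u.val := by
      apply Prod.ext <;> simp <;> linarith
    rw [this]; exact u.2
  exact ((isCell_decomp _ _ _ hr1 hr2 hr3 hr4).mp hu).1

lemma negx_negx (C : ℤ × ℤ) : negx (negx C) = C := by
  obtain ⟨a, b⟩ := C
  show ((-1 - (-1 - a), b) : ℤ × ℤ) = (a, b)
  norm_num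

lemma swp_swp (C : ℤ × ℤ) : swp (swp C) = C := rfl

lemma cX_cnr (m : ℕ) {C : ℤ × ℤ} (hC : IsCell C) (h v : Bool) :
    cX (cnr m hC h v) = cnr m (isCell_negx hC) (!h) v := by
  apply Subtype.ext
  show negx (cnr m hC h v).val = _
  rw [cnr_val, cnr_val]
  apply Prod.ext
  · show -1 - (C.1 * 3 ^ m + _) = _
    cases h <;> simp [negx] <;> ring
  · rfl

lemma cS_cnr (m : ℕ) {C : ℤ × ℤ} (hC : IsCell C) (h v : Bool) :
    cS (cnr m hC h v) = cnr m (isCell_swp hC) v h := by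
  apply Subtype.ext
  show swp (cnr m hC h v).val = _
  rw [cnr_val, cnr_val]
  rfl

def negy (C : ℤ × ℤ) : ℤ × ℤ := (C.1, -1 - C.2)

lemma negy_negy (C : ℤ × ℤ) : negy (negy C) = C := by
  obtain ⟨a, b⟩ := C
  show ((a, -1 - (-1 - b)) : ℤ × ℤ) = (a, b)
  norm_num

def cY (u : Cell) : Cell := cS (cX (cS u))

lemma isCell_negy {C : ℤ × ℤ} (hC : IsCell C) : IsCell (negy C) :=
  isCell_swp (isCell_negx (isCell_swp hC))

lemma WD.map_cY {u v L} (h : WD u v L) : WD (cY u) (cY v) L :=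
  h.map_cS.map_cX.map_cS

lemma cY_cnr (m : ℕ) {C : ℤ × ℤ} (hC : IsCell C) (h v : Bool) :
    cY (cnr m hC h v) = cnr m (isCell_negy hC) h (!v) := by
  unfold cY
  rw [cS_cnr, cX_cnr, cS_cnr]
  rfl

lemma inBlk_cX {m C u} (h : InBlk m C u) : InBlk m (negx C) (cX u) := by
  obtain ⟨h1, h2⟩ := h
  constructor
  · show (-1 - u.val.1) / 3 ^ m = -1 - C.1
    rw [ediv_neg' _ _ (tpow_pos m), h1]
  · exact h2

lemma inBlk_cS {m C u} (h : InBlk m C u) : InBlk m (swp C) (cS u) := ⟨h.2, h.1⟩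

/-! ### numeric bounds -/

def dB (m : ℕ) : ℕ := 3 * 2 ^ m - 3
def eB (m : ℕ) : ℕ := 6 * 2 ^ m - 6
def AB (m : ℕ) : ℕ := 64 * 2 ^ m - 64

lemma two_pow_succ' (m : ℕ) : (2:ℕ) ^ (m + 1) = 2 * 2 ^ m := by rw [pow_succ]; ring

lemma one_le_two_pow' (m : ℕ) : 1 ≤ 2 ^ m := Nat.one_le_two_pow

lemma dB_succ (m : ℕ) : dB (m + 1) = 2 * dB m + 3 := by
  unfold dB; rw [two_pow_succ']; have := one_le_two_pow' m; omega

lemma eB_succ (m : ℕ) : 2 * dB m + eB m + 3 ≤ eB (m + 1) := by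
  unfold dB eB; rw [two_pow_succ']; have := one_le_two_pow' m; omega

lemma dB_le_eB (m : ℕ) : dB m ≤ eB m := by
  unfold dB eB; have := one_le_two_pow' m; omega

lemma AB_succ (m : ℕ) : AB m + 8 * eB m + 4 + eB (m + 1) ≤ AB (m + 1) := by
  unfold AB eB; rw [two_pow_succ']; have := one_le_two_pow' m; omega


/-! ### Stage 3b: the main induction -/

lemma wd_step_up {m : ℕ} {D D' : ℤ × ℤ} (hD : IsCell D) (hD' : IsCell D')
    (hx : D'.1 = D.1) (hy : D'.2 = D.2 + 1) (h : Bool) :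
    WD (cnr m hD h true) (cnr m hD' h false) 1 := by
  apply wd_up
  · rw [cnr_val, cnr_val, hx]
  · rw [cnr_val, cnr_val, hy]
    simp only
    have := tpow_pos m
    cases h <;> simp <;> ring

lemma wd_step_right {m : ℕ} {D D' : ℤ × ℤ} (hD : IsCell D) (hD' : IsCell D')
    (hx : D'.1 = D.1 + 1) (hy : D'.2 = D.2) (v : Bool) :
    WD (cnr m hD true v) (cnr m hD' false v) 1 := by
  apply wd_right
  · rw [cnr_val, cnr_val, hx]
    simp only
    have := tpow_pos m
    cases v <;> simp <;> ring
  · rw [cnr_val, cnr_val, hy]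

lemma wd_cross {m : ℕ} {C : ℤ × ℤ} (hC : IsCell C)
    (hA : IsCell (C.1 * 3 + 0, C.2 * 3 + 1)) (hB : IsCell (C.1 * 3 + 2, C.2 * 3 + 1)) :
    WD (cnr m hA true false) (cnr m hB false true) 1 := by
  refine WD.of_adj (adj_holeH m C.1 C.2 hC ?_ ?_ ?_ ?_ ?_)
  · show (C.1 * 3 + 0) * 3 ^ m + ((3:ℤ) ^ m - 1) = _
    rw [pow_succ3]; ring
  · show (C.1 * 3 + 2) * 3 ^ m + (0:ℤ) = _
    rw [pow_succ3]; ring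
  · show _ ≤ (C.2 * 3 + 1) * 3 ^ m + (0:ℤ)
    rw [pow_succ3]; linarith [tpow_pos m]
  · show (C.2 * 3 + 1) * 3 ^ m + (0:ℤ) < _
    rw [pow_succ3]; linarith [tpow_pos m]
  · show (C.2 * 3 + 1) * 3 ^ m + ((3:ℤ) ^ m - 1) =
      2 * (C.2 * 3 ^ (m + 1) + 3 ^ m) + 3 ^ m - 1 - ((C.2 * 3 + 1) * 3 ^ m + 0)
    rw [pow_succ3]; ring

lemma cnr_sub_id {m : ℕ} {C : ℤ × ℤ} (hC : IsCell C) (h v : Bool)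
    (hS : IsCell (C.1 * 3 + (if h then 2 else 0), C.2 * 3 + (if v then 2 else 0))) :
    cnr (m + 1) hC h v = cnr m hS h v := by
  apply Subtype.ext
  rw [cnr_val, cnr_val]
  have hps := pow_succ3 m
  cases h <;> cases v <;> apply Prod.ext <;> rw [hps] <;> norm_num <;> try ring

lemma corner_any {m : ℕ}
    (hPd : ∀ (C) (hC : IsCell C) (h v : Bool),
      WD (cnr m hC h v) (cnr m hC (!h) (!v)) (dB m))
    (hPe : ∀ (C) (hC : IsCell C) (h v : Bool),
      WD (cnr m hC h v) (cnr m hC (!h) v) (eB m) ∧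
      WD (cnr m hC h v) (cnr m hC h (!v)) (eB m)) :
    ∀ (C) (hC : IsCell C) (h v h' v' : Bool), WD (cnr m hC h v) (cnr m hC h' v') (eB m) := by
  intro C hC h v h' v'
  by_cases e1 : h' = h <;> by_cases e2 : v' = v
  · rw [e1, e2]; exact (WD.rfl _).mono (Nat.zero_le _)
  · rw [e1, show v' = !v by cases v <;> cases v' <;> simp_all]
    exact (hPe C hC h v).2
  · rw [e2, show h' = !h by cases h <;> cases h' <;> simp_all]
    exact (hPe C hC h v).1
  · rw [show h' = !h by cases h <;> cases h' <;> simp_all,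
      show v' = !v by cases v <;> cases v' <;> simp_all]
    exact (hPd C hC h v).mono (dB_le_eB m)

theorem main_ind (m : ℕ) :
    (∀ (C : ℤ × ℤ) (hC : IsCell C) (h v : Bool),
        WD (cnr m hC h v) (cnr m hC (!h) (!v)) (dB m)) ∧
    (∀ (C : ℤ × ℤ) (hC : IsCell C) (h v : Bool),
        WD (cnr m hC h v) (cnr m hC (!h) v) (eB m) ∧
        WD (cnr m hC h v) (cnr m hC h (!v)) (eB m)) ∧
    (∀ (C : ℤ × ℤ) (hC : IsCell C) (u : Cell), InBlk m C u →
        ∀ h v : Bool, WD u (cnr m hC h v) (AB m)) := by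
  induction m with
  | zero =>
    have key : ∀ (C : ℤ × ℤ) (hC : IsCell C) (h v h' v' : Bool),
        cnr 0 hC h v = cnr 0 hC h' v' := by
      intro C hC h v h' v'
      apply Subtype.ext
      rw [cnr_val, cnr_val]
      cases h <;> cases v <;> cases h' <;> cases v' <;> norm_num
    refine ⟨fun C hC h v => ?_, fun C hC h v => ⟨?_, ?_⟩, fun C hC u hu h v => ?_⟩
    · rw [key C hC h v (!h) (!v)]; exact (WD.rfl _).mono (Nat.zero_le _)
    · rw [key C hC h v (!h) v]; exact (WD.rfl _).mono (Nat.zero_le _)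
    · rw [key C hC h v h (!v)]; exact (WD.rfl _).mono (Nat.zero_le _)
    · have hu' : u = cnr 0 hC h v := by
        apply Subtype.ext
        rw [cnr_val]
        obtain ⟨h1, h2⟩ := hu
        rw [pow_zero, Int.ediv_one] at h1 h2
        apply Prod.ext <;> cases h <;> cases v <;> simp [h1, h2]
      rw [← hu']
      exact (WD.rfl _).mono (Nat.zero_le _)
  | succ m ih =>
    obtain ⟨Pd, Pe, Pa⟩ := ih
    have Pc := corner_any Pd Pe
    -- sub-block cells
    have sub : ∀ (C : ℤ × ℤ), IsCell C → ∀ t1 t2 : ℤ, 0 ≤ t1 → t1 < 3 → 0 ≤ t2 → t2 < 3 →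
        ¬(t1 = 1 ∧ t2 = 1) → IsCell (C.1 * 3 + t1, C.2 * 3 + t2) :=
      fun C hC t1 t2 a b c d e => isCell_sub hC a b c d e
    -- diagonal route
    have route_d : ∀ (C) (hC : IsCell C),
        WD (cnr (m + 1) hC false false) (cnr (m + 1) hC true true) (2 * dB m + 3) := by
      intro C hC
      have hS00 := sub C hC 0 0 (by norm_num) (by norm_num) (by norm_num) (by norm_num) (by norm_num)
      have hS01 := sub C hC 0 1 (by norm_num) (by norm_num) (by norm_num) (by norm_num) (by norm_num)
      have hS21 := sub C hC 2 1 (by norm_num) (by norm_num) (by norm_num) (by norm_num) (by norm_num)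
      have hS22 := sub C hC 2 2 (by norm_num) (by norm_num) (by norm_num) (by norm_num) (by norm_num)
      rw [cnr_sub_id hC false false hS00, cnr_sub_id hC true true hS22]
      have w1 := Pd _ hS00 false false
      have a1 := wd_step_up (m := m) hS00 hS01 rfl (by ring) true
      have a2 := wd_cross (m := m) hC hS01 hS21
      have a3 := wd_step_up (m := m) hS21 hS22 rfl (by ring) false
      have w2 := Pd _ hS22 false false
      exact ((((w1.trans a1).trans a2).trans a3).trans w2).mono (by omega)
    -- full diagonal claim
    have Pd' : ∀ (C) (hC : IsCell C) (h v : Bool),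
        WD (cnr (m + 1) hC h v) (cnr (m + 1) hC (!h) (!v)) (dB (m + 1)) := by
      intro C hC h v
      rw [dB_succ]
      have tf : ∀ (C) (hC : IsCell C),
          WD (cnr (m + 1) hC true false) (cnr (m + 1) hC false true) (2 * dB m + 3) := by
        intro C hC
        have h0 := (route_d (negx C) (isCell_negx hC)).map_cX
        rw [cX_cnr, cX_cnr] at h0
        exact wd_congr (cnr_congr _ hC (negx_negx C) _ _) (cnr_congr _ hC (negx_negx C) _ _) h0
      cases h <;> cases v
      · exact route_d C hC
      · exact (tf C hC).symm
      · exact tf C hC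
      · exact (route_d C hC).symm
    -- horizontal adjacent route
    have route_e : ∀ (C) (hC : IsCell C),
        WD (cnr (m + 1) hC false false) (cnr (m + 1) hC true false)
          (2 * dB m + eB m + 3) := by
      intro C hC
      have hS00 := sub C hC 0 0 (by norm_num) (by norm_num) (by norm_num) (by norm_num) (by norm_num)
      have hS01 := sub C hC 0 1 (by norm_num) (by norm_num) (by norm_num) (by norm_num) (by norm_num)
      have hS21 := sub C hC 2 1 (by norm_num) (by norm_num) (by norm_num) (by norm_num) (by norm_num)
      have hS20 := sub C hC 2 0 (by norm_num) (by norm_num) (by norm_num) (by norm_num) (by norm_num)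
      rw [cnr_sub_id hC false false hS00, cnr_sub_id hC true false hS20]
      have w1 := Pd _ hS00 false false
      have a1 := wd_step_up (m := m) hS00 hS01 rfl (by ring) true
      have a2 := wd_cross (m := m) hC hS01 hS21
      have w2 := Pd _ hS21 false true
      have a3 := (wd_step_up (m := m) hS20 hS21 rfl (by ring) true).symm
      have w3 := (Pe _ hS20 true true).2
      exact (((((w1.trans a1).trans a2).trans w2).trans a3).trans w3).mono (by omega)
    -- full horizontal claim
    have PeH : ∀ (C) (hC : IsCell C) (h v : Bool),
        WD (cnr (m + 1) hC h v) (cnr (m + 1) hC (!h) v) (eB (m + 1)) := by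
      intro C hC h v
      have key : ∀ (C) (hC : IsCell C),
          WD (cnr (m + 1) hC false false) (cnr (m + 1) hC true false) (eB (m + 1)) :=
        fun C hC => (route_e C hC).mono (by have := eB_succ m; omega)
      have keyt : ∀ (C) (hC : IsCell C),
          WD (cnr (m + 1) hC false true) (cnr (m + 1) hC true true) (eB (m + 1)) := by
        intro C hC
        have h0 := (key (negy C) (isCell_negy hC)).map_cY
        rw [cY_cnr, cY_cnr] at h0
        exact wd_congr (cnr_congr _ hC (negy_negy C) _ _) (cnr_congr _ hC (negy_negy C) _ _) h0
      cases h <;> cases v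
      · exact key C hC
      · exact keyt C hC
      · exact (key C hC).symm
      · exact (keyt C hC).symm
    -- full vertical claim
    have PeV : ∀ (C) (hC : IsCell C) (h v : Bool),
        WD (cnr (m + 1) hC h v) (cnr (m + 1) hC h (!v)) (eB (m + 1)) := by
      intro C hC h v
      have h0 := (PeH (swp C) (isCell_swp hC) v h).map_cS
      rw [cS_cnr, cS_cnr] at h0
      exact wd_congr (cnr_congr _ hC (swp_swp C) _ _) (cnr_congr _ hC (swp_swp C) _ _) h0
    have Pc' := corner_any Pd' (fun C hC h v => ⟨PeH C hC h v, PeV C hC h v⟩)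
    -- hops between adjacent blocks at level m
    have hopR : ∀ (D D' : ℤ × ℤ) (hD : IsCell D) (hD' : IsCell D'),
        D'.1 = D.1 + 1 → D'.2 = D.2 → ∀ h v h' v' : Bool,
        WD (cnr m hD h v) (cnr m hD' h' v') (2 * eB m + 1) := by
      intro D D' hD hD' hx hy h v h' v'
      have w1 := Pc D hD h v true false
      have a1 := wd_step_right (m := m) hD hD' hx hy false
      have w2 := Pc D' hD' false false h' v'
      exact ((w1.trans a1).trans w2).mono (by omega)
    have hopU : ∀ (D D' : ℤ × ℤ) (hD : IsCell D) (hD' : IsCell D'),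
        D'.1 = D.1 → D'.2 = D.2 + 1 → ∀ h v h' v' : Bool,
        WD (cnr m hD h v) (cnr m hD' h' v') (2 * eB m + 1) := by
      intro D D' hD hD' hx hy h v h' v'
      have w1 := Pc D hD h v false true
      have a1 := wd_step_up (m := m) hD hD' hx hy false
      have w2 := Pc D' hD' false false h' v'
      exact ((w1.trans a1).trans w2).mono (by omega)
    -- the chain lemma
    have chain : ∀ (C) (hC : IsCell C) (t1 t2 : ℤ), 0 ≤ t1 → t1 < 3 → 0 ≤ t2 → t2 < 3 →
        ¬(t1 = 1 ∧ t2 = 1) → ∀ (hS : IsCell (C.1 * 3 + t1, C.2 * 3 + t2)) (u : Cell),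
        InBlk m (C.1 * 3 + t1, C.2 * 3 + t2) u →
        WD u (cnr (m + 1) hC false false) (AB m + 8 * eB m + 4) := by
      intro C hC t1 t2 ha hb hc hd he hS u hu
      have hS00 := sub C hC 0 0 (by norm_num) (by norm_num) (by norm_num) (by norm_num) (by norm_num)
      have hS10 := sub C hC 1 0 (by norm_num) (by norm_num) (by norm_num) (by norm_num) (by norm_num)
      have hS20 := sub C hC 2 0 (by norm_num) (by norm_num) (by norm_num) (by norm_num) (by norm_num)
      have hS01 := sub C hC 0 1 (by norm_num) (by norm_num) (by norm_num) (by norm_num) (by norm_num)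
      have hS21 := sub C hC 2 1 (by norm_num) (by norm_num) (by norm_num) (by norm_num) (by norm_num)
      have hS02 := sub C hC 0 2 (by norm_num) (by norm_num) (by norm_num) (by norm_num) (by norm_num)
      have hS12 := sub C hC 1 2 (by norm_num) (by norm_num) (by norm_num) (by norm_num) (by norm_num)
      have hS22 := sub C hC 2 2 (by norm_num) (by norm_num) (by norm_num) (by norm_num) (by norm_num)
      rw [cnr_sub_id hC false false hS00]
      -- hops pointing toward the origin block
      have hL10 : WD (cnr m hS10 false false) (cnr m hS00 false false) (2 * eB m + 1) :=
        (hopR _ _ hS00 hS10 (by ring) (by ring) false false false false).symm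
      have hL20 : WD (cnr m hS20 false false) (cnr m hS10 false false) (2 * eB m + 1) :=
        (hopR _ _ hS10 hS20 (by ring) (by ring) false false false false).symm
      have hD01 : WD (cnr m hS01 false false) (cnr m hS00 false false) (2 * eB m + 1) :=
        (hopU _ _ hS00 hS01 (by ring) (by ring) false false false false).symm
      have hD02 : WD (cnr m hS02 false false) (cnr m hS01 false false) (2 * eB m + 1) :=
        (hopU _ _ hS01 hS02 (by ring) (by ring) false false false false).symm
      have hD21 : WD (cnr m hS21 false false) (cnr m hS20 false false) (2 * eB m + 1) :=
        (hopU _ _ hS20 hS21 (by ring) (by ring) false false false false).symm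
      have hL12 : WD (cnr m hS12 false false) (cnr m hS02 false false) (2 * eB m + 1) :=
        (hopR _ _ hS02 hS12 (by ring) (by ring) false false false false).symm
      have hL22 : WD (cnr m hS22 false false) (cnr m hS12 false false) (2 * eB m + 1) :=
        (hopR _ _ hS12 hS22 (by ring) (by ring) false false false false).symm
      have h1 : t1 = 0 ∨ t1 = 1 ∨ t1 = 2 := by omega
      have h2 : t2 = 0 ∨ t2 = 1 ∨ t2 = 2 := by omega
      rcases h1 with rfl | rfl | rfl <;> rcases h2 with rfl | rfl | rfl
      · exact (Pa _ hS u hu false false).mono (by omega)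
      · exact ((Pa _ hS u hu false false).trans hD01).mono (by omega)
      · exact (((Pa _ hS u hu false false).trans hD02).trans hD01).mono (by omega)
      · exact ((Pa _ hS u hu false false).trans hL10).mono (by omega)
      · exact absurd ⟨rfl, rfl⟩ he
      · exact ((((Pa _ hS u hu false false).trans hL12).trans hD02).trans hD01).mono (by omega)
      · exact (((Pa _ hS u hu false false).trans hL20).trans hL10).mono (by omega)
      · exact ((((Pa _ hS u hu false false).trans hD21).trans hL20).trans hL10).mono (by omega)
      · exact (((((Pa _ hS u hu false false).trans hL22).trans hL12).trans hD02).trans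
          hD01).mono (by omega)
    -- the full A claim at level m+1
    have Pa' : ∀ (C) (hC : IsCell C) (u : Cell), InBlk (m + 1) C u →
        ∀ h v : Bool, WD u (cnr (m + 1) hC h v) (AB (m + 1)) := by
      intro C hC u hu h v
      obtain ⟨h1, h2⟩ := hu
      have hp := tpow_pos m
      have hps := pow_succ3 m
      have b1 := (ediv_eq_iff' (tpow_pos (m + 1))).mp h1
      have b2 := (ediv_eq_iff' (tpow_pos (m + 1))).mp h2
      have q1 := (ediv_eq_iff' (u := u.val.1) (c := u.val.1 / 3 ^ m) (tpow_pos m)).mp rfl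
      have q2 := (ediv_eq_iff' (u := u.val.2) (c := u.val.2 / 3 ^ m) (tpow_pos m)).mp rfl
      set s1 := u.val.1 / 3 ^ m with hs1
      set s2 := u.val.2 / 3 ^ m with hs2
      rw [hps] at b1 b2
      have r1a : C.1 * 3 < s1 + 1 :=
        lt_of_mul_lt_mul_right (by linarith [b1.1, q1.2]) (tpow_pos m).le
      have r1b : s1 < C.1 * 3 + 3 :=
        lt_of_mul_lt_mul_right (by linarith [b1.2, q1.1]) (tpow_pos m).le
      have r2a : C.2 * 3 < s2 + 1 :=
        lt_of_mul_lt_mul_right (by linarith [b2.1, q2.2]) (tpow_pos m).le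
      have r2b : s2 < C.2 * 3 + 3 :=
        lt_of_mul_lt_mul_right (by linarith [b2.2, q2.1]) (tpow_pos m).le
      set t1 := s1 - C.1 * 3 with ht1
      set t2 := s2 - C.2 * 3 with ht2
      have hSblk : IsCell (C.1 * 3 + t1, C.2 * 3 + t2) := by
        have := blk_isCell m u
        rw [← hs1, ← hs2] at this
        have e1 : C.1 * 3 + t1 = s1 := by omega
        have e2 : C.2 * 3 + t2 = s2 := by omega
        rw [e1, e2]
        exact this
      have hne : ¬(t1 = 1 ∧ t2 = 1) := by
        rintro ⟨e1, e2⟩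
        apply hSblk 0
        constructor
        · show dig 0 (C.1 * 3 + t1) = 1
          rw [e1, dig_eq, pow_zero, Int.ediv_one, add_comm, mul_comm, Int.add_mul_emod_self_left]
          rfl
        · show dig 0 (C.2 * 3 + t2) = 1
          rw [e2, dig_eq, pow_zero, Int.ediv_one, add_comm, mul_comm, Int.add_mul_emod_self_left]
          rfl
      have hinb : InBlk m (C.1 * 3 + t1, C.2 * 3 + t2) u := by
        constructor
        · show s1 = C.1 * 3 + t1
          omega
        · show s2 = C.2 * 3 + t2
          omega
      have w1 := chain C hC t1 t2 (by omega) (by omega) (by omega) (by omega) hne hSblk u hinb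
      have w2 := Pc' C hC false false h v
      exact (w1.trans w2).mono (by have := AB_succ m; omega)
    exact ⟨Pd', fun C hC h v => ⟨PeH C hC h v, PeV C hC h v⟩, Pa'⟩


/-! ### Stage 4a: connectivity -/

lemma isCell_origin : IsCell ((0:ℤ), (0:ℤ)) := by
  intro k hk
  have := dig_zero' k
  rw [show ((0:ℤ),(0:ℤ)).1 = 0 from rfl] at hk
  omega

def O : Cell := ⟨(0, 0), isCell_origin⟩

lemma wd_origin (u : Cell) : ∃ L, WD u O L := by
  set N := u.val.1.natAbs + u.val.2.natAbs + 1 with hN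
  have hpow : (N:ℤ) < 3 ^ N := by exact_mod_cast (Nat.lt_pow_self (by norm_num : 1 < 3) : N < 3 ^ N)
  have ha1 : (u.val.1.natAbs : ℤ) < 3 ^ N := by
    have h' : u.val.1.natAbs < N := by omega
    calc ((u.val.1.natAbs : ℤ)) < (N : ℤ) := by exact_mod_cast h'
      _ < 3 ^ N := hpow
  have ha2 : (u.val.2.natAbs : ℤ) < 3 ^ N := by
    have h' : u.val.2.natAbs < N := by omega
    calc ((u.val.2.natAbs : ℤ)) < (N : ℤ) := by exact_mod_cast h'
      _ < 3 ^ N := hpow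
  have k1 := Int.le_natAbs (a := u.val.1)
  have k2 := Int.le_natAbs (a := -u.val.1)
  rw [Int.natAbs_neg] at k2
  have k3 := Int.le_natAbs (a := u.val.2)
  have k4 := Int.le_natAbs (a := -u.val.2)
  rw [Int.natAbs_neg] at k4
  have habs1 : -(3:ℤ)^N < u.val.1 ∧ u.val.1 < 3^N := ⟨by linarith, by linarith⟩
  have habs2 : -(3:ℤ)^N < u.val.2 ∧ u.val.2 < 3^N := ⟨by linarith, by linarith⟩
  have b1 : u.val.1 / 3^N = 0 ∨ u.val.1 / 3^N = -1 := by
    rcases le_or_gt 0 u.val.1 with h | h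
    · exact Or.inl (Int.ediv_eq_zero_of_lt h habs1.2)
    · refine Or.inr ((ediv_eq_iff' (tpow_pos N)).mpr ⟨by linarith, by norm_num; linarith⟩)
  have b2 : u.val.2 / 3^N = 0 ∨ u.val.2 / 3^N = -1 := by
    rcases le_or_gt 0 u.val.2 with h | h
    · exact Or.inl (Int.ediv_eq_zero_of_lt h habs2.2)
    · refine Or.inr ((ediv_eq_iff' (tpow_pos N)).mpr ⟨by linarith, by norm_num; linarith⟩)
  have hC := blk_isCell N u
  have hub : InBlk N (u.val.1 / 3^N, u.val.2 / 3^N) u := ⟨rfl, rfl⟩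
  have Pa := (main_ind N).2.2 _ hC u hub
  have hO : IsCell ((-1 : ℤ), (0:ℤ)) := isCell_negx isCell_origin
  rcases b1 with e1 | e1 <;> rcases b2 with e2 | e2
  · refine ⟨AB N, wd_congr rfl ?_ (Pa false false)⟩
    apply Subtype.ext
    rw [cnr_val]
    show _ = ((0:ℤ), (0:ℤ))
    simp only
    rw [e1, e2]
    norm_num
  · -- block (0, -1): corner (false, true) has value (0, -1)
    refine ⟨AB N + 1, (Pa false true).trans (wd_up ?_ ?_)⟩
    · show (0:ℤ) = _
      rw [cnr_val]; simp only; rw [e1]; norm_num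
    · show (0:ℤ) = _
      rw [cnr_val]; simp only; rw [e2]; norm_num; ring
  · -- block (-1, 0): corner (true, false) has value (-1, 0)
    refine ⟨AB N + 1, (Pa true false).trans (wd_right ?_ ?_)⟩
    · show (0:ℤ) = _
      rw [cnr_val]; simp only; rw [e1]; norm_num; ring
    · show (0:ℤ) = _
      rw [cnr_val]; simp only; rw [e2]; norm_num
  · -- block (-1, -1): corner (true, true) has value (-1, -1)
    refine ⟨AB N + 1 + 1,
      ((Pa true true).trans (wd_up (u := cnr N hC true true) (v := ⟨(-1, 0), hO⟩) ?_ ?_)).trans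
        (wd_right ?_ ?_)⟩
    · show (-1 : ℤ) = _
      rw [cnr_val]; simp only; rw [e1]; norm_num; ring
    · show (0:ℤ) = _
      rw [cnr_val]; simp only; rw [e2]; norm_num; ring
    · show (0:ℤ) = -1 + 1
      norm_num
    · show (0:ℤ) = 0
      rfl

lemma reachable_all (u v : Cell) : PG.Reachable u v := by
  obtain ⟨Lu, wu, _⟩ := wd_origin u
  obtain ⟨Lv, wv, _⟩ := wd_origin v
  exact ⟨wu.append wv.reverse⟩


/-! ### Stage 4b: finiteness of balls -/

def Yf (s : ℕ) (p : ℤ × ℤ) : ℤ :=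
  2 * (((p.2 - 3^s) / 3^(s+1)) * 3^(s+1) + 3^s) + 3^s - 1 - p.2

def qRf (s : ℕ) (p : ℤ × ℤ) : ℤ × ℤ := (p.1 + 1 + 3^s, Yf s p)

def qLf (s : ℕ) (p : ℤ × ℤ) : ℤ × ℤ := (p.1 - 3^s - 1, Yf s p)

lemma abs_ge_one_31 (a : ℤ) : (1:ℤ) ≤ |3*a+1| := by
  rcases abs_cases (3*a+1) with ⟨he, _⟩ | ⟨he, _⟩ <;> omega

lemma abs_ge_one_32 (a : ℤ) : (1:ℤ) ≤ |3*a+2| := by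
  rcases abs_cases (3*a+2) with ⟨he, _⟩ | ⟨he, _⟩ <;> omega

lemma holeH_right_eq {p q : ℤ × ℤ} (h : HoleAdjH pι p q) :
    ∃ s : ℕ, (3:ℤ)^s ≤ |p.1 + 1| ∧ q = qRf s p := by
  obtain ⟨s, a, b, hab, h1, h2, h3, h4, h5⟩ := h
  simp only [pι, uniform, flipH, reduceIte] at h5
  have hps := pow_succ3 s
  have ht := tpow_pos s
  refine ⟨s, ?_, ?_⟩
  · have key : p.1 + 1 = 3^s * (3*a+1) := by rw [hps] at h1; linarith
    rw [key, abs_mul, abs_of_pos ht]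
    nlinarith [abs_ge_one_31 a]
  · have hb : (p.2 - 3^s) / 3^(s+1) = b := by
      apply (ediv_eq_iff' (tpow_pos (s+1))).mpr
      constructor
      · linarith
      · rw [hps] at h4 ⊢; linarith
    apply Prod.ext
    · show q.1 = p.1 + 1 + 3^s
      rw [hps] at h1 h2; linarith
    · show q.2 = Yf s p
      unfold Yf; rw [hb]; linarith

lemma holeH_left_eq {p q : ℤ × ℤ} (h : HoleAdjH pι q p) :
    ∃ s : ℕ, (3:ℤ)^s ≤ |p.1| ∧ q = qLf s p := by
  obtain ⟨s, a, b, hab, h1, h2, h3, h4, h5⟩ := h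
  simp only [pι, uniform, flipH, reduceIte] at h5
  have hps := pow_succ3 s
  have ht := tpow_pos s
  refine ⟨s, ?_, ?_⟩
  · have key : p.1 = 3^s * (3*a+2) := by rw [hps] at h2; linarith
    rw [key, abs_mul, abs_of_pos ht]
    nlinarith [abs_ge_one_32 a]
  · have hb : (p.2 - 3^s) / 3^(s+1) = b := by
      apply (ediv_eq_iff' (tpow_pos (s+1))).mpr
      constructor
      · rw [hps] at h3 h4 h5 ⊢; linarith
      · rw [hps] at h3 h4 h5 ⊢; linarith
    apply Prod.ext
    · show q.1 = p.1 - 3^s - 1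
      rw [hps] at h1 h2; linarith
    · show q.2 = Yf s p
      unfold Yf; rw [hb]; linarith

lemma sbound {s : ℕ} {B : ℤ} (hle : (3:ℤ)^s ≤ B) {K : ℕ} (hB : B < (K:ℤ)) : s < K := by
  by_contra hc
  push_neg at hc
  have h1 : (3:ℤ)^K ≤ 3^s := pow_le_pow_right₀ (by norm_num) hc
  have h2 : (K:ℤ) < 3^K := by exact_mod_cast (Nat.lt_pow_self (by norm_num : 1 < 3) : K < 3 ^ K)
  linarith

lemma nbrs_finite (p : Cell) : {v : Cell | PG.Adj p v}.Finite := by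
  classical
  set K := p.val.1.natAbs + p.val.2.natAbs + 2 with hK
  set T : Set (ℤ × ℤ) :=
    ({(p.val.1+1, p.val.2), (p.val.1-1, p.val.2), (p.val.1, p.val.2+1), (p.val.1, p.val.2-1)} :
      Set (ℤ × ℤ)) ∪
    ⋃ s ∈ Finset.range K,
      ({qRf s p.val, qLf s p.val, swp (qRf s (swp p.val)), swp (qLf s (swp p.val))} :
        Set (ℤ × ℤ)) with hT
  have hKa1 : |p.val.1| + 1 < (K:ℤ) := by
    rw [Int.abs_eq_natAbs]
    exact_mod_cast (by omega : p.val.1.natAbs + 1 < K)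
  have hKa2 : |p.val.2| + 1 < (K:ℤ) := by
    rw [Int.abs_eq_natAbs]
    exact_mod_cast (by omega : p.val.2.natAbs + 1 < K)
  have hTfin : T.Finite := by
    apply Set.Finite.union
    · exact (((Set.finite_singleton _).insert _).insert _).insert _
    · exact Set.Finite.biUnion (Finset.range K).finite_toSet
        (fun s _ => (((Set.finite_singleton _).insert _).insert _).insert _)
  have hsub : Subtype.val '' {v : Cell | PG.Adj p v} ⊆ T := by
    rintro _ ⟨v, hv, rfl⟩
    obtain ⟨_, _, hne, hd⟩ := hv
    rcases hd with hp | hH | hH' | hV | hV'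
    · left
      have a1 := abs_cases (p.val.1 - v.val.1)
      have a2 := abs_cases (p.val.2 - v.val.2)
      simp only [Set.mem_insert_iff, Set.mem_singleton_iff, Prod.ext_iff]
      rcases a1 with ⟨e1, _⟩ | ⟨e1, _⟩ <;> rcases a2 with ⟨e2, _⟩ | ⟨e2, _⟩ <;> omega
    · obtain ⟨s, hle, he⟩ := holeH_right_eq hH
      have hsK : s ∈ Finset.range K := Finset.mem_range.mpr
        (sbound hle (by have := abs_add_le p.val.1 1; simp at this; omega))
      refine Or.inr (Set.mem_biUnion (Finset.mem_coe.mpr hsK) ?_)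
      rw [he]; simp [Set.mem_insert_iff]
    · obtain ⟨s, hle, he⟩ := holeH_left_eq hH'
      have hsK : s ∈ Finset.range K := Finset.mem_range.mpr (sbound hle (by omega))
      refine Or.inr (Set.mem_biUnion (Finset.mem_coe.mpr hsK) ?_)
      rw [he]; simp [Set.mem_insert_iff]
    · obtain ⟨s, hle, he⟩ := holeH_right_eq (holeAdjV_swp hV)
      have hv' : v.val = swp (qRf s (swp p.val)) := by rw [← he, swp_swp]
      have hlt : |p.val.2 + 1| < (K:ℤ) := by
        have := abs_add_le p.val.2 1
        simp at this
        omega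
      have hsK : s ∈ Finset.range K := Finset.mem_range.mpr (sbound hle hlt)
      refine Or.inr (Set.mem_biUnion (Finset.mem_coe.mpr hsK) ?_)
      rw [hv']; simp [Set.mem_insert_iff]
    · obtain ⟨s, hle, he⟩ := holeH_left_eq (holeAdjV_swp hV')
      have hv' : v.val = swp (qLf s (swp p.val)) := by rw [← he, swp_swp]
      have hlt : |p.val.2| < (K:ℤ) := by omega
      have hsK : s ∈ Finset.range K := Finset.mem_range.mpr (sbound hle hlt)
      refine Or.inr (Set.mem_biUnion (Finset.mem_coe.mpr hsK) ?_)
      rw [hv']; simp [Set.mem_insert_iff]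
  exact Set.Finite.of_finite_image (hTfin.subset hsub)
    (fun a _ b _ hab => Subtype.ext hab)

lemma walkset_finite (x : Cell) (k : ℕ) :
    {y : Cell | ∃ w : PG.Walk y x, w.length ≤ k}.Finite := by
  induction k with
  | zero =>
    apply Set.Finite.subset (Set.finite_singleton x)
    rintro y ⟨w, hw⟩
    have : w.length = 0 := by omega
    exact SimpleGraph.Walk.eq_of_length_eq_zero this
  | succ k ih =>
    apply Set.Finite.subset
      ((Set.finite_singleton x).union
        (Set.Finite.biUnion ih (fun z _ => nbrs_finite z)))
    rintro y ⟨w, hw⟩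
    cases w with
    | nil => exact Or.inl rfl
    | cons ha w' =>
      right
      exact Set.mem_biUnion ⟨w', by simpa using hw⟩ ha.symm
  
lemma ball_finite (x : Cell) (r : ℕ) : (ball pι x r).Finite := by
  apply Set.Finite.subset (walkset_finite x r)
  intro y hy
  have hr := reachable_all x y
  obtain ⟨w, hw⟩ := hr.exists_walk_length_eq_dist
  exact ⟨w.reverse, by rw [SimpleGraph.Walk.length_reverse, hw]; exact le_of_lt hy⟩


/-! ### Stage 4c: counting cells in a block -/

def df8 : Fin 8 → ℤ × ℤ := ![(0,0),(0,1),(0,2),(1,0),(1,2),(2,0),(2,1),(2,2)]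

def encL : List (Fin 8) → ℤ × ℤ
  | [] => (0, 0)
  | d :: l => ((df8 d).1 + 3 * (encL l).1, (df8 d).2 + 3 * (encL l).2)

lemma df8_bounds (d : Fin 8) :
    0 ≤ (df8 d).1 ∧ (df8 d).1 < 3 ∧ 0 ≤ (df8 d).2 ∧ (df8 d).2 < 3 := by
  fin_cases d <;> norm_num [df8]

lemma df8_ne11 (d : Fin 8) : ¬((df8 d).1 = 1 ∧ (df8 d).2 = 1) := by
  fin_cases d <;> norm_num [df8]

lemma df8_inj (d d' : Fin 8) (h1 : (df8 d).1 = (df8 d').1) (h2 : (df8 d).2 = (df8 d').2) :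
    d = d' := by
  revert h1 h2
  revert d d'
  decide

lemma encL_bounds (l : List (Fin 8)) :
    0 ≤ (encL l).1 ∧ (encL l).1 < 3 ^ l.length ∧
    0 ≤ (encL l).2 ∧ (encL l).2 < 3 ^ l.length := by
  induction l with
  | nil => simp [encL]
  | cons d l ih =>
    obtain ⟨a1, a2, a3, a4⟩ := ih
    have hb := df8_bounds d
    have hps := pow_succ3 l.length
    show 0 ≤ (df8 d).1 + 3 * (encL l).1 ∧ (df8 d).1 + 3 * (encL l).1 < 3 ^ (l.length + 1) ∧
      0 ≤ (df8 d).2 + 3 * (encL l).2 ∧ (df8 d).2 + 3 * (encL l).2 < 3 ^ (l.length + 1)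
    refine ⟨by linarith [hb.1], by rw [hps]; linarith [hb.2.1], by linarith [hb.2.2.1],
      by rw [hps]; linarith [hb.2.2.2]⟩

lemma dig_shift (k : ℕ) (a x : ℤ) (h0 : 0 ≤ a) (h3 : a < 3) :
    dig (k + 1) (a + 3 * x) = dig k x := by
  rw [dig_eq, dig_eq, pow_succ3, ← ediv_ediv' _ 3 (3 ^ k) (by norm_num) (tpow_pos k),
    show a + 3 * x = a + x * 3 by ring, Int.add_mul_ediv_right _ _ (by norm_num : (3:ℤ) ≠ 0),
    Int.ediv_eq_zero_of_lt h0 h3, zero_add]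

lemma dig_zero_small (a x : ℤ) (h0 : 0 ≤ a) (h3 : a < 3) : dig 0 (a + 3 * x) = a := by
  rw [dig_eq, pow_zero, Int.ediv_one, show a + 3 * x = a + x * 3 by ring,
    Int.add_mul_emod_self_right, Int.emod_eq_of_lt h0 h3]

lemma encL_dig (l : List (Fin 8)) (k : ℕ) (hk : k < l.length) :
    ¬(dig k (encL l).1 = 1 ∧ dig k (encL l).2 = 1) := by
  induction l generalizing k with
  | nil => simp at hk
  | cons d l ih =>
    have hb := df8_bounds d
    cases k with
    | zero =>
      show ¬(dig 0 ((df8 d).1 + 3 * (encL l).1) = 1 ∧ dig 0 ((df8 d).2 + 3 * (encL l).2) = 1)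
      rw [dig_zero_small _ _ hb.1 hb.2.1, dig_zero_small _ _ hb.2.2.1 hb.2.2.2]
      exact df8_ne11 d
    | succ k =>
      show ¬(dig (k+1) ((df8 d).1 + 3 * (encL l).1) = 1 ∧
        dig (k+1) ((df8 d).2 + 3 * (encL l).2) = 1)
      rw [dig_shift _ _ _ hb.1 hb.2.1, dig_shift _ _ _ hb.2.2.1 hb.2.2.2]
      exact ih k (by simpa using hk)

lemma encL_inj : ∀ (l l' : List (Fin 8)), l.length = l'.length → encL l = encL l' → l = l' := by
  intro l
  induction l with
  | nil =>
    intro l' h _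
    cases l' with
    | nil => rfl
    | cons d' t' => simp at h
  | cons d t ih =>
    intro l' hlen heq
    cases l' with
    | nil => simp at hlen
    | cons d' t' =>
      have hb := df8_bounds d
      have hb' := df8_bounds d'
      have e1 : (df8 d).1 + 3 * (encL t).1 = (df8 d').1 + 3 * (encL t').1 :=
        congrArg Prod.fst heq
      have e2 : (df8 d).2 + 3 * (encL t).2 = (df8 d').2 + 3 * (encL t').2 :=
        congrArg Prod.snd heq
      have k1 : (df8 d).1 = (df8 d').1 ∧ (encL t).1 = (encL t').1 := by omega
      have k2 : (df8 d).2 = (df8 d').2 ∧ (encL t).2 = (encL t').2 := by omega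
      have hd : d = d' := df8_inj _ _ k1.1 k2.1
      subst hd
      have ht : t = t' := ih t' (by simpa using hlen) (Prod.ext k1.2 k2.2)
      rw [ht]

end ProofAux

/-- With projective plane identifications, for every cell `x` of the
infinite magic carpet there exists `M` such that for all `m ≥ M`,
`#B(x, m·2^m) ≥ 8^m`. -/
theorem ball_card_lower_bound_proj (x : Cell) :
    ∃ M : ℕ, ∀ m : ℕ, M ≤ m →
      8 ^ m ≤ (ball (uniform IdentType.proj) x (m * 2 ^ m)).ncard := by
  refine ⟨129, fun m hm => ?_⟩
  have hC : IsCell (x.val.1 / 3 ^ m, x.val.2 / 3 ^ m) := blk_isCell m x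
  set C := ((x.val.1 / 3 ^ m, x.val.2 / 3 ^ m) : ℤ × ℤ) with hCdef
  have hlen : ∀ v : Fin m → Fin 8, (List.ofFn v).length = m := fun v => List.length_ofFn
  have hcell : ∀ v : Fin m → Fin 8,
      IsCell (C.1 * 3 ^ m + (encL (List.ofFn v)).1, C.2 * 3 ^ m + (encL (List.ofFn v)).2) := by
    intro v
    have hb := encL_bounds (List.ofFn v)
    rw [hlen v] at hb
    refine (isCell_decomp C _ _ hb.1 hb.2.1 hb.2.2.1 hb.2.2.2).mpr ⟨hC, fun k hk => ?_⟩
    exact encL_dig (List.ofFn v) k (by rwa [hlen v])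
  set F : (Fin m → Fin 8) → Cell := fun v => ⟨_, hcell v⟩ with hF
  have hFinj : Function.Injective F := by
    intro v v' he
    have h1 : (F v).val = (F v').val := congrArg Subtype.val he
    have e1 : C.1 * 3 ^ m + (encL (List.ofFn v)).1 = C.1 * 3 ^ m + (encL (List.ofFn v')).1 :=
      congrArg Prod.fst h1
    have e2 : C.2 * 3 ^ m + (encL (List.ofFn v)).2 = C.2 * 3 ^ m + (encL (List.ofFn v')).2 :=
      congrArg Prod.snd h1
    have heq : encL (List.ofFn v) = encL (List.ofFn v') :=
      Prod.ext (by linarith) (by linarith)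
    have := encL_inj _ _ (by rw [hlen v, hlen v']) heq
    exact List.ofFn_injective this
  have hwd : ∀ v, WD x (F v) (2 * AB m) := by
    intro v
    have hx : InBlk m C x := ⟨rfl, rfl⟩
    have hb := encL_bounds (List.ofFn v)
    rw [hlen v] at hb
    have hFv : InBlk m C (F v) := by
      constructor
      · show (C.1 * 3 ^ m + (encL (List.ofFn v)).1) / 3 ^ m = C.1
        exact ediv_block _ _ hb.1 hb.2.1
      · show (C.2 * 3 ^ m + (encL (List.ofFn v)).2) / 3 ^ m = C.2
        exact ediv_block _ _ hb.2.2.1 hb.2.2.2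
    exact (((main_ind m).2.2 C hC x hx false false).trans
      (((main_ind m).2.2 C hC (F v) hFv false false).symm)).mono (by omega)
  have hsub : Set.range F ⊆ ball pι x (m * 2 ^ m) := by
    rintro _ ⟨v, rfl⟩
    obtain ⟨w, hw⟩ := hwd v
    show PG.dist x (F v) < m * 2 ^ m
    have hd : PG.dist x (F v) ≤ 2 * AB m := le_trans (SimpleGraph.dist_le w) hw
    have h1 : 129 * 2 ^ m ≤ m * 2 ^ m := Nat.mul_le_mul_right (2 ^ m) hm
    have h2 : 1 ≤ 2 ^ m := one_le_two_pow' m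
    unfold AB at hd
    omega
  have hfin := ball_finite x (m * 2 ^ m)
  have hcard : (Set.range F).ncard = 8 ^ m := by
    rw [← Set.image_univ, Set.ncard_image_of_injective _ hFinj, Set.ncard_univ,
      Nat.card_eq_fintype_card, Fintype.card_fun, Fintype.card_fin, Fintype.card_fin]
  calc (8:ℕ) ^ m = (Set.range F).ncard := hcard.symm
    _ ≤ (ball (uniform IdentType.proj) x (m * 2 ^ m)).ncard := Set.ncard_le_ncard hsub hfin


end MagicCarpet
end

section
/- Fix any identification type (torus, Klein bottle, or projective plane). Any path of successively adjacent cells that is contained entirely in a copy of V_m inside IMC, begins at a cell on one m-edge of that copy, and ends at a cell on the opposite m-edge of that copy, has at least 2^m − 1 steps; consequently a path inside a copy of V_m with at most 2^m − 1 steps that begins along one m-edge of the copy cannot leave the copy along the opposite m-edge. -/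
/-!
Magic carpets (Sierpinski carpet with torus / Klein bottle / projective plane
identifications of the sides of the vacant squares), following
"Analysis on the projective octagasket and other fractafolds" setup of the paper
"Magic carpets" (Goodman–Siu–Strichartz et al.).

Cells of the infinite blowup are indexed by their lower-left corners in `ℤ × ℤ`
(in units where every cell is a unit square).  A lattice square is a cell iff no
base-3 digit position carries the digit `1` in both coordinates simultaneously.
The vacant square ("hole") of level `s` at block `(a, b)` is the middle ninth of
the level-`(s+1)` block with block coordinates `(a, b)`, i.e. the square
`[a·3^(s+1)+3^s, a·3^(s+1)+2·3^s) × [b·3^(s+1)+3^s, b·3^(s+1)+2·3^s)`; it is a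
genuine vacant square of the carpet iff `(a,b)` itself satisfies the cell
condition.  Opposite sides of each vacant square are identified according to the
chosen identification type; orientation-reversal of a pair of sides reverses the
transverse coordinate.
-/

namespace MagicCarpet

/-- Potential function on one coordinate inside a level-`m` block. -/
def ff : ℕ → ℤ → ℤ
  | 0, _ => 0
  | s+1, x =>
    if x < 3^s then ff s x
    else if x < 2*3^s then
      2^s - 1 + min (min (ff s (x - 3^s)) (ff s (2*3^s - 1 - x))) 1
    else 2^s + ff s (x - 2*3^s)

lemma ff_left (m : ℕ) {x : ℤ} (h : x < 3^m) : ff (m+1) x = ff m x := by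
  simp only [ff]; rw [if_pos h]

lemma ff_mid (m : ℕ) {x : ℤ} (h1 : 3^m ≤ x) (h2 : x < 2*3^m) :
    ff (m+1) x = 2^m - 1 + min (min (ff m (x - 3^m)) (ff m (2*3^m - 1 - x))) 1 := by
  simp only [ff]; rw [if_neg (not_lt.mpr h1), if_pos h2]

lemma ff_right (m : ℕ) {x : ℤ} (h : 2*3^m ≤ x) :
    ff (m+1) x = 2^m + ff m (x - 2*3^m) := by
  have hP : (0:ℤ) < 3^m := by positivity
  simp only [ff]; rw [if_neg (by push_neg; linarith), if_neg (not_lt.mpr h)]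

lemma ff_zero : ∀ m : ℕ, ff m 0 = 0
  | 0 => rfl
  | m+1 => by rw [ff_left m (by positivity), ff_zero m]

lemma ff_max : ∀ m : ℕ, ff m (3^m - 1) = 2^m - 1
  | 0 => rfl
  | m+1 => by
    have hP : (0:ℤ) < 3^m := by positivity
    have e2 : (3:ℤ)^(m+1) = 3*3^m := by rw [pow_succ]; ring
    rw [ff_right m (by linarith)]
    rw [show (3:ℤ)^(m+1) - 1 - 2*3^m = 3^m - 1 by linarith, ff_max m]
    have e2' : (2:ℤ)^(m+1) = 2*2^m := by rw [pow_succ]; ring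
    linarith

lemma ff_at_pow (m : ℕ) : ff (m+1) (3^m) = 2^m - 1 := by
  have hP : (0:ℤ) < 3^m := by positivity
  have h21 : (1:ℤ) ≤ 2^m := one_le_pow₀ (by norm_num)
  rw [ff_mid m le_rfl (by linarith)]
  rw [show (3:ℤ)^m - 3^m = 0 by ring, show 2*(3:ℤ)^m - 1 - 3^m = 3^m - 1 by ring,
    ff_zero, ff_max]
  rw [show min (0:ℤ) (2^m-1) = 0 from min_eq_left (by linarith),
    show min (0:ℤ) 1 = 0 from min_eq_left (by norm_num)]
  ring

lemma ff_at_two_pow_sub_one (m : ℕ) : ff (m+1) (2*3^m - 1) = 2^m - 1 := by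
  have hP : (0:ℤ) < 3^m := by positivity
  have h21 : (1:ℤ) ≤ 2^m := one_le_pow₀ (by norm_num)
  rw [ff_mid m (by linarith) (by linarith)]
  rw [show 2*(3:ℤ)^m - 1 - 3^m = 3^m - 1 by ring, show 2*(3:ℤ)^m - 1 - (2*3^m - 1) = 0 by ring,
    ff_zero, ff_max]
  rw [show min ((2:ℤ)^m-1) 0 = 0 from min_eq_right (by linarith),
    show min (0:ℤ) 1 = 0 from min_eq_left (by norm_num)]
  ring

lemma ff_at_two_pow (m : ℕ) : ff (m+1) (2*3^m) = 2^m := by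
  rw [ff_right m le_rfl, show 2*(3:ℤ)^m - 2*3^m = 0 by ring, ff_zero, add_zero]

/-- Hole jump move on a coordinate. -/
def MvJ (s : ℕ) (a x y : ℤ) : Prop :=
  x = a*3^(s+1)+3^s-1 ∧ y = a*3^(s+1)+2*3^s

/-- Hole reflection move on a coordinate. -/
def MvR (s : ℕ) (a x y : ℤ) : Prop :=
  a*3^(s+1)+3^s ≤ x ∧ x < a*3^(s+1)+2*3^s ∧ y = 2*(a*3^(s+1)+3^s)+3^s-1-x

/-- All the moves a single coordinate of a cell can make along a walk in a level-`m` copy. -/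
def Mv (m : ℕ) (x y : ℤ) : Prop :=
  |x - y| = 1 ∨ ∃ s a, s < m ∧ (MvJ s a x y ∨ MvJ s a y x ∨ MvR s a x y ∨ MvR s a y x)

lemma mv_symm {m : ℕ} {x y : ℤ} (h : Mv m x y) : Mv m y x := by
  rcases h with h | ⟨s, a, hs, h1 | h2 | h3 | h4⟩
  · left; rw [abs_sub_comm]; exact h
  · exact Or.inr ⟨s, a, hs, Or.inr (Or.inl h1)⟩
  · exact Or.inr ⟨s, a, hs, Or.inl h2⟩
  · exact Or.inr ⟨s, a, hs, Or.inr (Or.inr (Or.inr h3))⟩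
  · exact Or.inr ⟨s, a, hs, Or.inr (Or.inr (Or.inl h4))⟩

lemma mv_conj (m : ℕ) {x y : ℤ} (h : Mv m x y) :
    Mv m (3^m - 1 - x) (3^m - 1 - y) := by
  rcases h with h | ⟨s, a, hs, hc⟩
  · left; rw [show (3:ℤ)^m - 1 - x - (3^m - 1 - y) = -(x - y) by ring, abs_neg]; exact h
  · have hpow : (3:ℤ)^(m-s-1) * 3^(s+1) = 3^m := by rw [← pow_add]; congr 1; omega
    have e1 : (3:ℤ)^(s+1) = 3*3^s := by rw [pow_succ]; ring
    refine Or.inr ⟨s, 3^(m-s-1) - 1 - a, hs, ?_⟩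
    have expand : ((3:ℤ)^(m-s-1) - 1 - a) * 3^(s+1) = 3^m - 3^(s+1) - a*3^(s+1) := by
      rw [← hpow]; ring
    rcases hc with ⟨hx, hy⟩ | ⟨hx, hy⟩ | ⟨h1, h2, h3⟩ | ⟨h1, h2, h3⟩
    · exact Or.inr (Or.inl ⟨by linarith, by linarith⟩)
    · exact Or.inl ⟨by linarith, by linarith⟩
    · exact Or.inr (Or.inr (Or.inl ⟨by linarith, by linarith, by linarith⟩))
    · exact Or.inr (Or.inr (Or.inr ⟨by linarith, by linarith, by linarith⟩))

lemma min3lip {a b a' b' : ℤ} (h1 : |a - a'| ≤ 1) (h2 : |b - b'| ≤ 1) :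
    |min (min a b) 1 - min (min a' b') 1| ≤ 1 := by
  rw [abs_le] at h1 h2 ⊢
  constructor <;> simp only [min_def] <;> split_ifs <;> omega

lemma block_decomp (m s : ℕ) (hs : s < m) (a x : ℤ)
    (hx0 : 0 ≤ x) (hx : x < 3^(m+1))
    (hxl : a*3^(s+1)+3^s-1 ≤ x) (hxr : x ≤ a*3^(s+1)+2*3^s) :
    ∃ k a' : ℤ, (k = 0 ∨ k = 1 ∨ k = 2) ∧
      a*3^(s+1) = k*3^m + a'*3^(s+1) ∧
      0 ≤ a'*3^(s+1) ∧ a'*3^(s+1)+2*3^s < 3^m := by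
  have hS : (0:ℤ) < 3^s := by positivity
  have hS1 : (0:ℤ) < 3^(s+1) := by positivity
  set t : ℤ := 3^(m-s-1) with ht_def
  have ht : 0 < t := by positivity
  have h3m : (3:ℤ)^m = t * 3^(s+1) := by rw [ht_def, ← pow_add]; congr 1; omega
  have e1 : (3:ℤ)^(s+1) = 3*3^s := by rw [pow_succ]; ring
  have e2 : (3:ℤ)^(m+1) = 3*3^m := by rw [pow_succ]; ring
  have ha0 : 0 ≤ a := by
    by_contra hcon; push_neg at hcon
    have h5 : a * 3^(s+1) ≤ (-1) * 3^(s+1) := by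
      apply mul_le_mul_of_nonneg_right (by omega) hS1.le
    linarith
  have ha3t : a < 3 * t := by
    by_contra hcon; push_neg at hcon
    have h5 : (3*t) * 3^(s+1) ≤ a * 3^(s+1) :=
      mul_le_mul_of_nonneg_right hcon hS1.le
    have h6 : (3*t) * 3^(s+1) = 3 * 3^m := by rw [h3m]; ring
    linarith
  refine ⟨a / t, a % t, ?_, ?_, ?_, ?_⟩
  · have hk0 : 0 ≤ a / t := Int.ediv_nonneg ha0 ht.le
    have hk2 : a / t < 3 := Int.ediv_lt_of_lt_mul ht (by linarith)
    omega
  · have h7 := Int.mul_ediv_add_emod a t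
    calc a * 3^(s+1) = (t*(a/t) + a%t) * 3^(s+1) := by rw [h7]
      _ = (a/t)*(t*3^(s+1)) + (a%t)*3^(s+1) := by ring
      _ = (a/t)*3^m + (a%t)*3^(s+1) := by rw [h3m]
  · exact mul_nonneg (Int.emod_nonneg a ht.ne') hS1.le
  · have h8 : a % t ≤ t - 1 := by have := Int.emod_lt_of_pos a ht; omega
    have h9 : (a%t) * 3^(s+1) ≤ (t-1) * 3^(s+1) :=
      mul_le_mul_of_nonneg_right h8 hS1.le
    have h10 : (t-1) * 3^(s+1) = 3^m - 3^(s+1) := by rw [h3m]; ring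
    linarith


lemma lip_shift (m : ℕ)
    (IH : ∀ x y : ℤ, 0 ≤ x → x < 3^m → 0 ≤ y → y < 3^m → Mv m x y → |ff m x - ff m y| ≤ 1)
    (k : ℤ) (hk : k = 0 ∨ k = 1 ∨ k = 2) (u v : ℤ)
    (hu0 : 0 ≤ u) (hu1 : u < 3^m) (hv0 : 0 ≤ v) (hv1 : v < 3^m) (hmv : Mv m u v) :
    |ff (m+1) (k*3^m+u) - ff (m+1) (k*3^m+v)| ≤ 1 := by
  have hP : (0:ℤ) < 3^m := by positivity
  rcases hk with rfl | rfl | rfl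
  · simp only [zero_mul, zero_add]
    rw [ff_left m hu1, ff_left m hv1]
    exact IH u v hu0 hu1 hv0 hv1 hmv
  · rw [ff_mid m (by linarith) (by linarith), ff_mid m (by linarith) (by linarith)]
    rw [show 1*(3:ℤ)^m + u - 3^m = u by ring, show 2*(3:ℤ)^m - 1 - (1*3^m+u) = 3^m-1-u by ring,
      show 1*(3:ℤ)^m + v - 3^m = v by ring, show 2*(3:ℤ)^m - 1 - (1*3^m+v) = 3^m-1-v by ring,
      add_sub_add_left_eq_sub]
    exact min3lip (IH u v hu0 hu1 hv0 hv1 hmv)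
      (IH (3^m-1-u) (3^m-1-v) (by linarith) (by linarith) (by linarith) (by linarith)
        (mv_conj m hmv))
  · rw [ff_right m (by linarith), ff_right m (by linarith),
      show 2*(3:ℤ)^m + u - 2*3^m = u by ring, show 2*(3:ℤ)^m + v - 2*3^m = v by ring,
      add_sub_add_left_eq_sub]
    exact IH u v hu0 hu1 hv0 hv1 hmv

lemma ff_lip : ∀ (m : ℕ) (x y : ℤ), 0 ≤ x → x < 3^m → 0 ≤ y → y < 3^m →
    Mv m x y → |ff m x - ff m y| ≤ 1 := by
  intro m
  induction m with
  | zero =>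
    intro x y hx0 hx1 hy0 hy1 _
    have hx : x = 0 := by simp only [pow_zero] at hx1; omega
    have hy : y = 0 := by simp only [pow_zero] at hy1; omega
    subst hx; subst hy; simp [ff]
  | succ m IH =>
    have hP : (0:ℤ) < 3^m := by positivity
    have hS2 : (0:ℤ) < 2^m := by positivity
    have h21 : (1:ℤ) ≤ 2^m := one_le_pow₀ (by norm_num)
    have e2 : (3:ℤ)^(m+1) = 3*3^m := by rw [pow_succ]; ring
    have key : ∀ x y : ℤ, 0 ≤ x → x < 3^(m+1) → 0 ≤ y → y < 3^(m+1) →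
        (y = x + 1 ∨ ∃ s a, s < m+1 ∧ (MvJ s a x y ∨ MvR s a x y)) →
        |ff (m+1) x - ff (m+1) y| ≤ 1 := by
      intro x y hx0 hx1 hy0 hy1 hcase
      rcases hcase with rfl | ⟨s, a, hs, hj | hr⟩
      · -- unit step
        rcases lt_or_ge (x+1) (3^m) with h1 | h1
        · rw [ff_left m (by linarith), ff_left m h1]
          refine IH x (x+1) hx0 (by linarith) (by linarith) h1 (Or.inl ?_)
          rw [show x - (x+1) = -1 by ring]; norm_num
        · rcases eq_or_lt_of_le h1 with h2 | h2
          · rw [show x = 3^m - 1 by linarith, show (3:ℤ)^m - 1 + 1 = 3^m by ring,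
              ff_left m (by linarith), ff_max, ff_at_pow]
            simp
          · rcases lt_or_ge (x+1) (2*3^m) with h3 | h3
            · rw [ff_mid m (by linarith) (by linarith), ff_mid m (by linarith) h3,
                add_sub_add_left_eq_sub]
              refine min3lip ?_ ?_
              · refine IH (x-3^m) (x+1-3^m) (by linarith) (by linarith) (by linarith)
                  (by linarith) (Or.inl ?_)
                rw [show x - 3^m - (x+1-3^m) = -1 by ring]; norm_num
              · refine IH (2*3^m-1-x) (2*3^m-1-(x+1)) (by linarith) (by linarith) (by linarith)
                  (by linarith) (Or.inl ?_)
                rw [show 2*(3:ℤ)^m-1-x - (2*3^m-1-(x+1)) = 1 by ring]; norm_num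
            · rcases eq_or_lt_of_le h3 with h4 | h4
              · rw [show x = 2*3^m - 1 by linarith, show 2*(3:ℤ)^m - 1 + 1 = 2*3^m by ring,
                  ff_at_two_pow_sub_one, ff_at_two_pow]
                rw [show (2:ℤ)^m - 1 - 2^m = -1 by ring]; norm_num
              · rw [ff_right m (by linarith), ff_right m (by linarith), add_sub_add_left_eq_sub]
                refine IH (x-2*3^m) (x+1-2*3^m) (by linarith) (by linarith) (by linarith)
                  (by linarith) (Or.inl ?_)
                rw [show x - 2*3^m - (x+1-2*3^m) = -1 by ring]; norm_num
      · -- jump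
        obtain ⟨hx, hy⟩ := hj
        have hS : (0:ℤ) < 3^s := by positivity
        have e1 : (3:ℤ)^(s+1) = 3*3^s := by rw [pow_succ]; ring
        by_cases hsm : s = m
        · subst hsm
          have ha : a = 0 := by
            rcases lt_trichotomy a 0 with h | h | h
            · exfalso
              have h5 : a * 3^(s+1) ≤ (-1) * 3^(s+1) :=
                mul_le_mul_of_nonneg_right (by omega) (by positivity)
              linarith
            · exact h
            · exfalso
              have h5 : (1:ℤ) * 3^(s+1) ≤ a * 3^(s+1) :=
                mul_le_mul_of_nonneg_right (by omega) (by positivity)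
              linarith
          subst ha
          rw [show x = 3^s - 1 by linarith, show y = 2*3^s by linarith,
            ff_left s (by linarith), ff_max, ff_at_two_pow]
          rw [show (2:ℤ)^s - 1 - 2^s = -1 by ring]; norm_num
        · have hsm' : s < m := by omega
          obtain ⟨k, a', hk, hB, hB0, hB1⟩ :=
            block_decomp m s hsm' a x hx0 hx1 (by linarith) (by linarith)
          set u := x - k*3^m with hu_def
          set v := y - k*3^m with hv_def
          have hxu : x = k*3^m + u := by ring
          have hyv : y = k*3^m + v := by ring
          have hu : u = a'*3^(s+1)+3^s-1 := by rw [hu_def]; linarith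
          have hv : v = a'*3^(s+1)+2*3^s := by rw [hv_def]; linarith
          rw [hxu, hyv]
          refine lip_shift m IH k hk u v (by linarith) (by linarith) (by linarith) (by linarith)
            (Or.inr ⟨s, a', hsm', Or.inl ⟨hu, hv⟩⟩)
      · -- reflection
        obtain ⟨h1, h2, h3⟩ := hr
        have hS : (0:ℤ) < 3^s := by positivity
        have e1 : (3:ℤ)^(s+1) = 3*3^s := by rw [pow_succ]; ring
        by_cases hsm : s = m
        · subst hsm
          have ha : a = 0 := by
            rcases lt_trichotomy a 0 with h | h | h
            · exfalso
              have h5 : a * 3^(s+1) ≤ (-1) * 3^(s+1) :=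
                mul_le_mul_of_nonneg_right (by omega) (by positivity)
              linarith
            · exact h
            · exfalso
              have h5 : (1:ℤ) * 3^(s+1) ≤ a * 3^(s+1) :=
                mul_le_mul_of_nonneg_right (by omega) (by positivity)
              linarith
          rw [ha] at h1 h2 h3
          rw [ff_mid s (by linarith) (by linarith), ff_mid s (by linarith) (by linarith)]
          rw [show 2*(3:ℤ)^s - 1 - x = y - 3^s by linarith,
            show 2*(3:ℤ)^s - 1 - y = x - 3^s by linarith, min_comm (ff s (y-3^s)) (ff s (x-3^s))]
          simp
        · have hsm' : s < m := by omega
          obtain ⟨k, a', hk, hB, hB0, hB1⟩ :=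
            block_decomp m s hsm' a x hx0 hx1 (by linarith) (by linarith)
          set u := x - k*3^m with hu_def
          set v := y - k*3^m with hv_def
          have hxu : x = k*3^m + u := by ring
          have hyv : y = k*3^m + v := by ring
          rw [hxu, hyv]
          refine lip_shift m IH k hk u v (by linarith) (by linarith) (by linarith) (by linarith)
            (Or.inr ⟨s, a', hsm', Or.inr (Or.inr (Or.inl ⟨by linarith, by linarith, by linarith⟩))⟩)
    intro x y hx0 hx1 hy0 hy1 hmv
    rcases hmv with habs | ⟨s, a, hs, hj1 | hj2 | hr1 | hr2⟩
    · rcases (abs_eq (by norm_num : (0:ℤ) ≤ 1)).mp habs with h | h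
      · rw [abs_sub_comm]
        exact key y x hy0 hy1 hx0 hx1 (Or.inl (by linarith))
      · exact key x y hx0 hx1 hy0 hy1 (Or.inl (by linarith))
    · exact key x y hx0 hx1 hy0 hy1 (Or.inr ⟨s, a, hs, Or.inl hj1⟩)
    · rw [abs_sub_comm]; exact key y x hy0 hy1 hx0 hx1 (Or.inr ⟨s, a, hs, Or.inl hj2⟩)
    · exact key x y hx0 hx1 hy0 hy1 (Or.inr ⟨s, a, hs, Or.inr hr1⟩)
    · rw [abs_sub_comm]; exact key y x hy0 hy1 hx0 hx1 (Or.inr ⟨s, a, hs, Or.inr hr2⟩)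



lemma incopy_bounds {m : ℕ} {C : ℤ × ℤ} {p : Cell} (h : InCopy m C p) :
    C.1*3^m ≤ p.val.1 ∧ p.val.1 < (C.1+1)*3^m ∧ C.2*3^m ≤ p.val.2 ∧ p.val.2 < (C.2+1)*3^m := by
  have hP : (0:ℤ) < 3^m := by positivity
  unfold InCopy copyOf at h
  rw [Prod.ext_iff] at h
  obtain ⟨h1, h2⟩ := h
  simp only at h1 h2
  have q1 := Int.mul_ediv_add_emod p.val.1 (3^m)
  have q2 := Int.mul_ediv_add_emod p.val.2 (3^m)
  have r1 := Int.emod_nonneg p.val.1 hP.ne'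
  have r2 := Int.emod_lt_of_pos p.val.1 hP
  have r3 := Int.emod_nonneg p.val.2 hP.ne'
  have r4 := Int.emod_lt_of_pos p.val.2 hP
  rw [show Int.ediv p.val.1 (3^m) = p.val.1 / 3^m from rfl] at h1
  rw [show Int.ediv p.val.2 (3^m) = p.val.2 / 3^m from rfl] at h2
  rw [h1] at q1; rw [h2] at q2
  have e1 : (C.1+1)*3^m = C.1*3^m + 3^m := by ring
  have e2 : (C.2+1)*3^m = C.2*3^m + 3^m := by ring
  have e3 : (3:ℤ)^m * C.1 = C.1*3^m := by ring
  have e4 : (3:ℤ)^m * C.2 = C.2*3^m := by ring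
  refine ⟨by linarith, by linarith, by linarith, by linarith⟩

lemma hole_h_mv (t : IdentType) (m : ℕ) (C : ℤ × ℤ) (p q : ℤ × ℤ)
    (h : HoleAdjH (uniform t) p q)
    (hp1 : C.1*3^m ≤ p.1) (hp1' : p.1 < (C.1+1)*3^m)
    (hq1 : C.1*3^m ≤ q.1) (hq1' : q.1 < (C.1+1)*3^m) :
    Mv m (p.1 - C.1*3^m) (q.1 - C.1*3^m) ∧
      (p.2 = q.2 ∨ Mv m (p.2 - C.2*3^m) (q.2 - C.2*3^m)) := by
  obtain ⟨s, a, b, hcell, he1, he2, hb1, hb2, he3⟩ := h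
  have hS : (0:ℤ) < 3^s := by positivity
  have hP : (0:ℤ) < 3^m := by positivity
  have e1 : (3:ℤ)^(s+1) = 3*3^s := by rw [pow_succ]; ring
  have eC1 : (C.1+1)*3^m = C.1*3^m + 3^m := by ring
  have hsm : s < m := by
    by_contra hc; push_neg at hc
    have h6 : (3:ℤ)^m ≤ 3^s := pow_le_pow_right₀ (by norm_num) hc
    linarith
  have hpow : (3:ℤ)^(m-s-1) * 3^(s+1) = 3^m := by rw [← pow_add]; congr 1; omega
  have ex : (a - C.1*3^(m-s-1)) * 3^(s+1) = a*3^(s+1) - C.1*3^m := by rw [← hpow]; ring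
  have ey : (b - C.2*3^(m-s-1)) * 3^(s+1) = b*3^(s+1) - C.2*3^m := by rw [← hpow]; ring
  constructor
  · exact Or.inr ⟨s, a - C.1*3^(m-s-1), hsm, Or.inl ⟨by linarith, by linarith⟩⟩
  · simp only [uniform] at he3
    cases hfb : flipH t
    · left; simp only [hfb, Bool.false_eq_true, if_false] at he3; exact he3.symm
    · right
      simp only [hfb, if_true] at he3
      exact Or.inr ⟨s, b - C.2*3^(m-s-1), hsm,
        Or.inr (Or.inr (Or.inl ⟨by linarith, by linarith, by linarith⟩))⟩

lemma hole_v_mv (t : IdentType) (m : ℕ) (C : ℤ × ℤ) (p q : ℤ × ℤ)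
    (h : HoleAdjV (uniform t) p q)
    (hp2 : C.2*3^m ≤ p.2) (hp2' : p.2 < (C.2+1)*3^m)
    (hq2 : C.2*3^m ≤ q.2) (hq2' : q.2 < (C.2+1)*3^m) :
    Mv m (p.2 - C.2*3^m) (q.2 - C.2*3^m) ∧
      (p.1 = q.1 ∨ Mv m (p.1 - C.1*3^m) (q.1 - C.1*3^m)) := by
  obtain ⟨s, a, b, hcell, he1, he2, hb1, hb2, he3⟩ := h
  have hS : (0:ℤ) < 3^s := by positivity
  have hP : (0:ℤ) < 3^m := by positivity
  have e1 : (3:ℤ)^(s+1) = 3*3^s := by rw [pow_succ]; ring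
  have eC2 : (C.2+1)*3^m = C.2*3^m + 3^m := by ring
  have hsm : s < m := by
    by_contra hc; push_neg at hc
    have h6 : (3:ℤ)^m ≤ 3^s := pow_le_pow_right₀ (by norm_num) hc
    linarith
  have hpow : (3:ℤ)^(m-s-1) * 3^(s+1) = 3^m := by rw [← pow_add]; congr 1; omega
  have ex : (b - C.2*3^(m-s-1)) * 3^(s+1) = b*3^(s+1) - C.2*3^m := by rw [← hpow]; ring
  have ey : (a - C.1*3^(m-s-1)) * 3^(s+1) = a*3^(s+1) - C.1*3^m := by rw [← hpow]; ring
  constructor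
  · exact Or.inr ⟨s, b - C.2*3^(m-s-1), hsm, Or.inl ⟨by linarith, by linarith⟩⟩
  · simp only [uniform] at he3
    cases hfb : flipV t
    · left; simp only [hfb, Bool.false_eq_true, if_false] at he3; exact he3.symm
    · right
      simp only [hfb, if_true] at he3
      exact Or.inr ⟨s, a - C.1*3^(m-s-1), hsm,
        Or.inr (Or.inr (Or.inl ⟨by linarith, by linarith, by linarith⟩))⟩

lemma adj_mv (t : IdentType) (m : ℕ) (C : ℤ × ℤ) (u v : Cell)
    (h : (IMC (uniform t)).Adj u v) (hu : InCopy m C u) (hv : InCopy m C v) :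
    (u.val.1 = v.val.1 ∨ Mv m (u.val.1 - C.1*3^m) (v.val.1 - C.1*3^m)) ∧
    (u.val.2 = v.val.2 ∨ Mv m (u.val.2 - C.2*3^m) (v.val.2 - C.2*3^m)) := by
  obtain ⟨bu1, bu2, bu3, bu4⟩ := incopy_bounds hu
  obtain ⟨bv1, bv2, bv3, bv4⟩ := incopy_bounds hv
  obtain ⟨_, _, hne, hcase⟩ := h
  rcases hcase with habs | hH | hH' | hV | hV'
  · rcases abs_cases (u.val.1 - v.val.1) with ⟨e1, s1⟩ | ⟨e1, s1⟩ <;>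
      rcases abs_cases (u.val.2 - v.val.2) with ⟨e2, s2⟩ | ⟨e2, s2⟩ <;>
      rw [e1, e2] at habs <;>
    · constructor
      · by_cases hd : u.val.1 = v.val.1
        · exact Or.inl hd
        · refine Or.inr (Or.inl ?_)
          rw [show u.val.1 - C.1*3^m - (v.val.1 - C.1*3^m) = u.val.1 - v.val.1 by ring]
          have hor : u.val.1 - v.val.1 = 1 ∨ u.val.1 - v.val.1 = -1 := by omega
          rcases hor with h | h <;> rw [h] <;> norm_num
      · by_cases hd : u.val.2 = v.val.2
        · exact Or.inl hd
        · refine Or.inr (Or.inl ?_)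
          rw [show u.val.2 - C.2*3^m - (v.val.2 - C.2*3^m) = u.val.2 - v.val.2 by ring]
          have hor : u.val.2 - v.val.2 = 1 ∨ u.val.2 - v.val.2 = -1 := by omega
          rcases hor with h | h <;> rw [h] <;> norm_num
  · obtain ⟨mx, my⟩ := hole_h_mv t m C u.val v.val hH bu1 bu2 bv1 bv2
    exact ⟨Or.inr mx, my⟩
  · obtain ⟨mx, my⟩ := hole_h_mv t m C v.val u.val hH' bv1 bv2 bu1 bu2
    refine ⟨Or.inr (mv_symm mx), ?_⟩
    rcases my with he | hm
    · exact Or.inl he.symm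
    · exact Or.inr (mv_symm hm)
  · obtain ⟨my, mx⟩ := hole_v_mv t m C u.val v.val hV bu3 bu4 bv3 bv4
    refine ⟨?_, Or.inr my⟩
    rcases mx with he | hm
    · exact Or.inl he
    · exact Or.inr hm
  · obtain ⟨my, mx⟩ := hole_v_mv t m C v.val u.val hV' bv3 bv4 bu3 bu4
    refine ⟨?_, Or.inr (mv_symm my)⟩
    rcases mx with he | hm
    · exact Or.inl he.symm
    · exact Or.inr (mv_symm hm)

lemma walk_bd (t : IdentType) (m : ℕ) (C : ℤ × ℤ) (x y : Cell)
    (w : (IMC (uniform t)).Walk x y)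
    (hsup : ∀ v ∈ w.support, InCopy m C v) :
    |ff m (x.val.1 - C.1*3^m) - ff m (y.val.1 - C.1*3^m)| ≤ (w.length : ℤ) ∧
    |ff m (x.val.2 - C.2*3^m) - ff m (y.val.2 - C.2*3^m)| ≤ (w.length : ℤ) := by
  induction w with
  | nil => simp
  | @cons u v z h w ih =>
    have hu : InCopy m C u := hsup u (SimpleGraph.Walk.start_mem_support _)
    have hv : InCopy m C v := by
      apply hsup
      rw [SimpleGraph.Walk.support_cons]
      exact List.mem_cons_of_mem _ (SimpleGraph.Walk.start_mem_support _)
    have hrest : ∀ c ∈ w.support, InCopy m C c := by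
      intro c hc; apply hsup
      rw [SimpleGraph.Walk.support_cons]
      exact List.mem_cons_of_mem _ hc
    obtain ⟨ih1, ih2⟩ := ih hrest
    obtain ⟨bu1, bu2, bu3, bu4⟩ := incopy_bounds hu
    obtain ⟨bv1, bv2, bv3, bv4⟩ := incopy_bounds hv
    have hP : (0:ℤ) < 3^m := by positivity
    have eC1 : (C.1+1)*3^m = C.1*3^m + 3^m := by ring
    have eC2 : (C.2+1)*3^m = C.2*3^m + 3^m := by ring
    obtain ⟨m1, m2⟩ := adj_mv t m C u v h hu hv
    have s1 : |ff m (u.val.1 - C.1*3^m) - ff m (v.val.1 - C.1*3^m)| ≤ 1 := by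
      rcases m1 with he | hmv
      · rw [he]; simp
      · exact ff_lip m _ _ (by linarith) (by linarith) (by linarith) (by linarith) hmv
    have s2 : |ff m (u.val.2 - C.2*3^m) - ff m (v.val.2 - C.2*3^m)| ≤ 1 := by
      rcases m2 with he | hmv
      · rw [he]; simp
      · exact ff_lip m _ _ (by linarith) (by linarith) (by linarith) (by linarith) hmv
    have hlen : (((SimpleGraph.Walk.cons h w).length : ℕ) : ℤ) = (w.length : ℤ) + 1 := by
      rw [SimpleGraph.Walk.length_cons]; push_cast; ring
    constructor
    · rw [hlen]
      calc |ff m (u.val.1 - C.1*3^m) - ff m (z.val.1 - C.1*3^m)|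
          ≤ |ff m (u.val.1 - C.1*3^m) - ff m (v.val.1 - C.1*3^m)| +
            |ff m (v.val.1 - C.1*3^m) - ff m (z.val.1 - C.1*3^m)| := abs_sub_le _ _ _
        _ ≤ (w.length : ℤ) + 1 := by linarith
    · rw [hlen]
      calc |ff m (u.val.2 - C.2*3^m) - ff m (z.val.2 - C.2*3^m)|
          ≤ |ff m (u.val.2 - C.2*3^m) - ff m (v.val.2 - C.2*3^m)| +
            |ff m (v.val.2 - C.2*3^m) - ff m (z.val.2 - C.2*3^m)| := abs_sub_le _ _ _
        _ ≤ (w.length : ℤ) + 1 := by linarith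

/-- For any identification type, a path of successively adjacent cells
contained in a copy of `V_m`, beginning at a cell on one `m`-edge of that copy and ending
at a cell on the opposite `m`-edge, has at least `2^m − 1` steps.  Consequently a path
inside the copy with at most `2^m − 1` steps that begins along one `m`-edge cannot leave
the copy along the opposite `m`-edge. -/
theorem cannot_cross_copy (t : IdentType) (m : ℕ) (C : ℤ × ℤ) (hC : IsCopy C) (d : Side) :
    (∀ (x y : Cell) (w : (IMC (uniform t)).Walk x y),
      (∀ v ∈ w.support, InCopy m C v) → OnSide m C d x → OnSide m C d.opp y →
        2 ^ m - 1 ≤ w.length) ∧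
    (∀ (x z y : Cell) (w : (IMC (uniform t)).Walk x z) (h : (IMC (uniform t)).Adj z y),
      (∀ v ∈ w.support, InCopy m C v) → OnSide m C d x → OnSide m C d.opp z →
        ¬InCopy m C y → ¬((w.concat h).length ≤ 2 ^ m - 1)) := by
  have h21 : (1:ℤ) ≤ 2^m := one_le_pow₀ (by norm_num)
  have main : ∀ (x y : Cell) (w : (IMC (uniform t)).Walk x y),
      (∀ v ∈ w.support, InCopy m C v) → OnSide m C d x → OnSide m C d.opp y →
        2 ^ m - 1 ≤ w.length := by
    intro x y w hsup hx hy
    have hb := walk_bd t m C x y w hsup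
    have key : ((2:ℤ)^m - 1) ≤ (w.length : ℤ) := by
      cases d with
      | left =>
        have hx1 : x.val.1 = C.1*3^m := hx.2
        have hy1 : y.val.1 = (C.1+1)*3^m - 1 := hy.2
        have hh := hb.1
        rw [hx1, hy1, sub_self, ff_zero,
          show (C.1+1)*3^m - 1 - C.1*3^m = 3^m - 1 by ring, ff_max,
          zero_sub, abs_neg, abs_of_nonneg (by linarith)] at hh
        exact hh
      | right =>
        have hx1 : x.val.1 = (C.1+1)*3^m - 1 := hx.2
        have hy1 : y.val.1 = C.1*3^m := hy.2
        have hh := hb.1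
        rw [hx1, hy1, sub_self, ff_zero,
          show (C.1+1)*3^m - 1 - C.1*3^m = 3^m - 1 by ring, ff_max,
          sub_zero, abs_of_nonneg (by linarith)] at hh
        exact hh
      | bottom =>
        have hx1 : x.val.2 = C.2*3^m := hx.2
        have hy1 : y.val.2 = (C.2+1)*3^m - 1 := hy.2
        have hh := hb.2
        rw [hx1, hy1, sub_self, ff_zero,
          show (C.2+1)*3^m - 1 - C.2*3^m = 3^m - 1 by ring, ff_max,
          zero_sub, abs_neg, abs_of_nonneg (by linarith)] at hh
        exact hh
      | top =>
        have hx1 : x.val.2 = (C.2+1)*3^m - 1 := hx.2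
        have hy1 : y.val.2 = C.2*3^m := hy.2
        have hh := hb.2
        rw [hx1, hy1, sub_self, ff_zero,
          show (C.2+1)*3^m - 1 - C.2*3^m = 3^m - 1 by ring, ff_max,
          sub_zero, abs_of_nonneg (by linarith)] at hh
        exact hh
    have hcast : ((2^m : ℕ) : ℤ) = (2:ℤ)^m := by push_cast; ring
    rw [← hcast] at key
    have h1 : 1 ≤ 2^m := Nat.one_le_two_pow
    generalize hN : (2:ℕ)^m = N at key h1 ⊢
    omega
  refine ⟨main, ?_⟩
  intro x z y w h hsup hx hz hy hle
  have hmain := main x z w hsup hx hz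
  rw [SimpleGraph.Walk.length_concat] at hle
  have h1 : 1 ≤ 2^m := Nat.one_le_two_pow
  generalize hN : (2:ℕ)^m = N at hmain h1 hle
  omega

end MagicCarpet
end
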